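/- arXiv:1705.08046 — 5 statements merged into one kernel-verified Lean document; each statement's English description precedes it below -/
import Mathlib

section
/- Let (Ω, F, P) be an atomless probability space, X a square-integrable real random variable, and A ∈ F with P(A) > 0. If E[X·1_{A₁}] = E[X·1_{A₂}] for all measurable subsets A₁, A₂ ⊆ A with P(A₁) = P(A₂), then X is P-almost surely constant on A. -/
open MeasureTheory Filter Topology

open scoped ENNReal

lemma wcl_small {Ω : Type*} [MeasurableSpace Ω] (μ : Measure Ω) [IsFiniteMeasure μ]
    (hatomless : ∀ s : Set Ω, MeasurableSet s → 0 < μ s →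
      ∃ t ⊆ s, MeasurableSet t ∧ 0 < μ t ∧ μ t < μ s)
    (s : Set Ω) (hs : MeasurableSet s) (hspos : 0 < μ s) (ε : ℝ≥0∞) (hε : 0 < ε) :
    ∃ t ⊆ s, MeasurableSet t ∧ 0 < μ t ∧ μ t < ε := by
  set D : Set ℝ≥0∞ := {m | ∃ t, t ⊆ s ∧ MeasurableSet t ∧ 0 < μ t ∧ μ t = m} with hD
  have hne : μ s ∈ D := ⟨s, subset_rfl, hs, hspos, rfl⟩
  have hδ0 : sInf D = 0 := by
    by_contra hδ
    have hδpos : 0 < sInf D := pos_iff_ne_zero.mpr hδ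
    have hδtop : sInf D ≠ ⊤ := ne_top_of_le_ne_top (measure_ne_top μ s) (sInf_le hne)
    have hlt : sInf D < 2 * sInf D := by
      rw [two_mul]
      exact ENNReal.lt_add_right hδtop hδ
    obtain ⟨m, hmD, hm⟩ := sInf_lt_iff.mp hlt
    obtain ⟨t, hts, htm, htpos, rfl⟩ := hmD
    obtain ⟨u, hut, humeas, hupos, hult⟩ := hatomless t htm htpos
    have h1 : sInf D ≤ μ u := sInf_le ⟨u, hut.trans hts, humeas, hupos, rfl⟩
    have h2 : μ (t \ u) = μ t - μ u := measure_diff hut humeas.nullMeasurableSet (measure_ne_top μ u)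
    have h3 : 0 < μ (t \ u) := by
      rw [h2]; exact tsub_pos_of_lt hult
    have h4 : sInf D ≤ μ (t \ u) :=
      sInf_le ⟨t \ u, (Set.diff_subset).trans hts, htm.diff humeas, h3, rfl⟩
    have h5 : μ (t \ u) < sInf D := by
      rw [h2]
      exact ENNReal.sub_lt_of_lt_add hult.le
        (hm.trans_le (by rw [two_mul]; exact add_le_add_right h1 _))
    exact absurd h4 (not_le.mpr h5)
  obtain ⟨m, hmD, hm⟩ := sInf_lt_iff.mp (hδ0 ▸ hε)
  obtain ⟨t, hts, htm, htpos, rfl⟩ := hmD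
  exact ⟨t, hts, htm, htpos, hm⟩

lemma wcl_exact {Ω : Type*} [MeasurableSpace Ω] (μ : Measure Ω) [IsFiniteMeasure μ]
    (hatomless : ∀ s : Set Ω, MeasurableSet s → 0 < μ s →
      ∃ t ⊆ s, MeasurableSet t ∧ 0 < μ t ∧ μ t < μ s)
    (s : Set Ω) (hs : MeasurableSet s) (r : ℝ≥0∞) (hr : r ≤ μ s) :
    ∃ t ⊆ s, MeasurableSet t ∧ μ t = r := by
  classical
  have hrtop : r ≠ ⊤ := ne_top_of_le_ne_top (measure_ne_top μ s) hr
  -- admissible increments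
  set P : Set Ω → Set Ω → Prop :=
    fun t u => u ⊆ s \ t ∧ MeasurableSet u ∧ μ t + μ u ≤ r with hP
  set Q : Set Ω → Prop := fun t => t ⊆ s ∧ MeasurableSet t ∧ μ t ≤ r with hQ
  have key : ∀ t : Set Ω, Q t → ∃ u, P t u ∧ ∀ v, P t v → μ v ≤ 2 * μ u := by
    intro t ht
    set S : Set ℝ≥0∞ := {m | ∃ u, P t u ∧ μ u = m} with hS
    have h0S : (0 : ℝ≥0∞) ∈ S := ⟨∅, ⟨Set.empty_subset _, MeasurableSet.empty, by
      simpa using ht.2.2⟩, measure_empty⟩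
    have hStop : sSup S ≠ ⊤ := by
      refine ne_top_of_le_ne_top hrtop (sSup_le ?_)
      rintro m ⟨u, ⟨-, -, hle⟩, rfl⟩
      exact le_trans le_add_self hle
    rcases eq_or_ne (sSup S) 0 with hsup | hsup
    · refine ⟨∅, ⟨Set.empty_subset _, MeasurableSet.empty, by simpa using ht.2.2⟩, ?_⟩
      intro v hv
      have : μ v ≤ sSup S := le_sSup ⟨v, hv, rfl⟩
      simp [hsup] at this ⊢
      simp [this]
    · have hhalf : sSup S / 2 < sSup S := ENNReal.half_lt_self hsup hStop
      obtain ⟨m, hmS, hm⟩ := lt_sSup_iff.mp hhalf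
      obtain ⟨u, hu, rfl⟩ := hmS
      refine ⟨u, hu, fun v hv => ?_⟩
      calc μ v ≤ sSup S := le_sSup ⟨v, hv, rfl⟩
        _ = sSup S / 2 + sSup S / 2 := (ENNReal.add_halves _).symm
        _ ≤ μ u + μ u := add_le_add hm.le hm.le
        _ = 2 * μ u := (two_mul _).symm
  have hQ0 : Q ∅ := ⟨Set.empty_subset _, MeasurableSet.empty, by simp⟩
  -- iteration
  let step : {t // Q t} → {t // Q t} := fun p =>
    let u := Classical.choose (key p.1 p.2)
    have hu := Classical.choose_spec (key p.1 p.2)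
    ⟨p.1 ∪ u, Set.union_subset p.2.1 (hu.1.1.trans Set.diff_subset),
      p.2.2.1.union hu.1.2.1, by
        rw [measure_union (Set.disjoint_of_subset_right hu.1.1 Set.disjoint_sdiff_right) hu.1.2.1]
        exact hu.1.2.2⟩
  let T : ℕ → {t // Q t} := fun n => step^[n] ⟨∅, hQ0⟩
  have hTsucc : ∀ n, T (n + 1) = step (T n) := fun n => Function.iterate_succ_apply' _ _ _
  have hmono : Monotone fun n => (T n).1 := by
    apply monotone_nat_of_le_succ
    intro n
    rw [hTsucc]
    exact Set.subset_union_left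
  -- the union
  set tinf : Set Ω := ⋃ n, (T n).1 with htinf
  have htinfs : tinf ⊆ s := Set.iUnion_subset fun n => (T n).2.1
  have htinfm : MeasurableSet tinf := MeasurableSet.iUnion fun n => (T n).2.2.1
  have htinfr : μ tinf ≤ r := by
    rw [htinf, hmono.directed_le.measure_iUnion]
    exact iSup_le fun n => (T n).2.2.2
  refine ⟨tinf, htinfs, htinfm, ?_⟩
  by_contra hne
  have hlt : μ tinf < r := lt_of_le_of_ne htinfr hne
  -- s \ tinf has positive measure
  have hdiff : μ (s \ tinf) = μ s - μ tinf := measure_diff htinfs htinfm.nullMeasurableSet (measure_ne_top _ _)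
  have hdpos : 0 < μ (s \ tinf) := by
    rw [hdiff]
    exact tsub_pos_of_lt (lt_of_lt_of_le hlt hr)
  obtain ⟨v, hvs, hvm, hvpos, hvlt⟩ :=
    wcl_small μ hatomless (s \ tinf) (hs.diff htinfm) hdpos (r - μ tinf) (tsub_pos_of_lt hlt)
  -- v is admissible at every stage
  have hvP : ∀ n, P (T n).1 v := by
    intro n
    refine ⟨hvs.trans (Set.diff_subset_diff_right (Set.subset_iUnion (fun n => ((T n : Set Ω))) n)), hvm, ?_⟩
    have h1 : μ v ≤ r - μ tinf := hvlt.le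
    have h2 : μ (T n).1 ≤ μ tinf := measure_mono (Set.subset_iUnion (fun n => (T n).1) n)
    calc μ (T n).1 + μ v ≤ μ tinf + (r - μ tinf) := add_le_add h2 h1
      _ ≤ r := by
          rw [add_comm, tsub_add_cancel_of_le hlt.le]
  -- hence each step adds at least μ v / 2
  have hgrow : ∀ n, μ v / 2 + μ (T n).1 ≤ μ (T (n + 1)).1 := by
    intro n
    rw [hTsucc]
    show μ v / 2 + μ (T n).1 ≤ μ ((T n).1 ∪ Classical.choose (key (T n).1 (T n).2))
    have hu := Classical.choose_spec (key (T n).1 (T n).2)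
    have hv2 : μ v ≤ 2 * μ (Classical.choose (key (T n).1 (T n).2)) := hu.2 v (hvP n)
    have hv2' : μ v / 2 ≤ μ (Classical.choose (key (T n).1 (T n).2)) :=
      ENNReal.div_le_of_le_mul' hv2
    rw [measure_union (Set.disjoint_of_subset_right hu.1.1 Set.disjoint_sdiff_right) hu.1.2.1]
    rw [add_comm]
    exact add_le_add le_rfl hv2'
  have hlow : ∀ n : ℕ, n * (μ v / 2) ≤ μ (T n).1 := by
    intro n
    induction n with
    | zero => simp
    | succ k ih =>
      push_cast [add_mul]
      calc (k : ℝ≥0∞) * (μ v / 2) + 1 * (μ v / 2) ≤ μ (T k).1 + μ v / 2 := by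
            rw [one_mul]; exact add_le_add ih le_rfl
        _ ≤ μ (T (k + 1)).1 := by rw [add_comm]; exact hgrow k
  -- contradiction: n * (μ v / 2) ≤ r for all n, but μ v / 2 > 0
  have hvhalf : 0 < μ v / 2 := ENNReal.div_pos hvpos.ne' (by norm_num)
  have hbound : ∀ n : ℕ, (n : ℝ≥0∞) * (μ v / 2) ≤ r := fun n => (hlow n).trans (T n).2.2.2
  obtain ⟨n, hn⟩ := ENNReal.exists_nat_gt (ENNReal.div_lt_top hrtop hvhalf.ne').ne
  have h6 : (n : ℝ≥0∞) ≤ r / (μ v / 2) :=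
    (ENNReal.le_div_iff_mul_le (Or.inl hvhalf.ne')
      (Or.inl (ENNReal.div_lt_top (measure_ne_top μ v) (by norm_num)).ne)).mpr (hbound n)
  exact absurd hn (not_lt.mpr h6)


/-- Constancy lemma: on an atomless probability space, if the integral of a square-integrable
random variable `X` over subsets of `A` depends only on their measure, then `X` is a.s.
constant on `A`. -/
theorem wasserstein_constancy_lemma
    {Ω : Type*} [MeasurableSpace Ω] (μ : Measure Ω) [IsProbabilityMeasure μ]
    (hatomless : ∀ s : Set Ω, MeasurableSet s → 0 < μ s →
      ∃ t ⊆ s, MeasurableSet t ∧ 0 < μ t ∧ μ t < μ s)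
    (X : Ω → ℝ) (hX : MemLp X 2 μ)
    (A : Set Ω) (hA : MeasurableSet A) (hApos : 0 < μ A)
    (h : ∀ A₁ A₂ : Set Ω, MeasurableSet A₁ → MeasurableSet A₂ → A₁ ⊆ A → A₂ ⊆ A →
      μ A₁ = μ A₂ → ∫ ω in A₁, X ω ∂μ = ∫ ω in A₂, X ω ∂μ) :
    ∃ c : ℝ, ∀ᵐ ω ∂μ, ω ∈ A → X ω = c := by
  classical
  -- measurable representative
  set Y : Ω → ℝ := hX.aestronglyMeasurable.mk X with hY
  have hYsm : StronglyMeasurable Y := hX.aestronglyMeasurable.stronglyMeasurable_mk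
  have hXY : X =ᵐ[μ] Y := hX.aestronglyMeasurable.ae_eq_mk
  have hYm : Measurable Y := hYsm.measurable
  have hXint : Integrable X μ := hX.integrable one_le_two
  have hYint : Integrable Y μ := hXint.congr hXY
  have hAtr : (μ A).toReal ≠ 0 :=
    (ENNReal.toReal_pos hApos.ne' (measure_ne_top μ A)).ne'
  set c : ℝ := (∫ ω in A, X ω ∂μ) / (μ A).toReal with hc
  have hcA : ∫ ω in A, X ω ∂μ = c * (μ A).toReal := (div_mul_cancel₀ _ hAtr).symm
  set B : Set Ω := A ∩ {ω | c < Y ω} with hB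
  set C : Set Ω := A ∩ {ω | Y ω < c} with hC
  have hBm : MeasurableSet B := hA.inter (measurableSet_lt measurable_const hYm)
  have hCm : MeasurableSet C := hA.inter (measurableSet_lt hYm measurable_const)
  -- the key dichotomy
  have hdich : μ B = 0 ∨ μ C = 0 := by
    by_contra hcon
    push_neg at hcon
    obtain ⟨hB0, hC0⟩ := hcon
    have hBpos : 0 < μ B := pos_iff_ne_zero.mpr hB0
    have hCpos : 0 < μ C := pos_iff_ne_zero.mpr hC0
    set r : ℝ≥0∞ := min (μ B) (μ C) with hr
    have hrpos : 0 < r := lt_min hBpos hCpos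
    have hrtop : r ≠ ⊤ := ne_top_of_le_ne_top (measure_ne_top μ B) (min_le_left _ _)
    obtain ⟨B', hB's, hB'm, hB'r⟩ := wcl_exact μ hatomless B hBm r (min_le_left _ _)
    obtain ⟨C', hC's, hC'm, hC'r⟩ := wcl_exact μ hatomless C hCm r (min_le_right _ _)
    have heq : ∫ ω in B', X ω ∂μ = ∫ ω in C', X ω ∂μ :=
      h B' C' hB'm hC'm (hB's.trans Set.inter_subset_left)
        (hC's.trans Set.inter_subset_left) (hB'r.trans hC'r.symm)
    have heqY : ∫ ω in B', Y ω ∂μ = ∫ ω in C', Y ω ∂μ := by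
      rw [← integral_congr_ae (ae_restrict_of_ae hXY),
        ← integral_congr_ae (ae_restrict_of_ae hXY)]
      exact heq
    -- ∫_{B'} Y > c * r.toReal
    have hBgt : c * r.toReal < ∫ ω in B', Y ω ∂μ := by
      have hnn : 0 ≤ᵐ[μ.restrict B'] fun ω => Y ω - c := by
        refine (ae_restrict_iff' hB'm).mpr (Filter.Eventually.of_forall fun ω hω => ?_)
        have : c < Y ω := (hB's hω).2
        simp only [Pi.zero_apply]; linarith
      have hint : IntegrableOn (fun ω => Y ω - c) B' μ :=
        (hYint.sub (integrable_const c)).integrableOn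
      have hpos : 0 < ∫ ω in B', Y ω - c ∂μ := by
        rw [setIntegral_pos_iff_support_of_nonneg_ae hnn hint]
        refine lt_of_lt_of_le (lt_of_lt_of_eq hrpos hB'r.symm) (measure_mono ?_)
        intro ω hω
        have : c < Y ω := (hB's hω).2
        exact ⟨Function.mem_support.mpr (sub_ne_zero.mpr this.ne'), hω⟩
      have hsplit : ∫ ω in B', Y ω - c ∂μ = (∫ ω in B', Y ω ∂μ) - c * (μ B').toReal := by
        rw [integral_sub hYint.integrableOn (integrable_const c).integrableOn]
        simp [Measure.restrict_apply_univ, mul_comm]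
        exact Or.inl rfl
      rw [hsplit, hB'r] at hpos
      linarith
    have hClt : ∫ ω in C', Y ω ∂μ < c * r.toReal := by
      have hnn : 0 ≤ᵐ[μ.restrict C'] fun ω => c - Y ω := by
        refine (ae_restrict_iff' hC'm).mpr (Filter.Eventually.of_forall fun ω hω => ?_)
        have : Y ω < c := (hC's hω).2
        simp only [Pi.zero_apply]; linarith
      have hint : IntegrableOn (fun ω => c - Y ω) C' μ :=
        ((integrable_const c).sub hYint).integrableOn
      have hpos : 0 < ∫ ω in C', c - Y ω ∂μ := by
        rw [setIntegral_pos_iff_support_of_nonneg_ae hnn hint]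
        refine lt_of_lt_of_le (lt_of_lt_of_eq hrpos hC'r.symm) (measure_mono ?_)
        intro ω hω
        have : Y ω < c := (hC's hω).2
        exact ⟨Function.mem_support.mpr (sub_ne_zero.mpr this.ne'), hω⟩
      have hsplit : ∫ ω in C', c - Y ω ∂μ = c * (μ C').toReal - ∫ ω in C', Y ω ∂μ := by
        rw [integral_sub (integrable_const c).integrableOn hYint.integrableOn]
        simp [Measure.restrict_apply_univ, mul_comm]
        exact Or.inl rfl
      rw [hsplit, hC'r] at hpos
      linarith
    rw [heqY] at hBgt
    linarith
  -- now conclude constancy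
  refine ⟨c, ?_⟩
  have hAY : ∫ ω in A, Y ω ∂μ = ∫ ω in A, X ω ∂μ :=
    integral_congr_ae (ae_restrict_of_ae hXY.symm)
  have key : ∀ᵐ ω ∂μ, ω ∈ A → Y ω = c := by
    rcases hdich with hB0 | hC0
    · -- Y ≤ c a.e. on A
      have hae : 0 ≤ᵐ[μ.restrict A] fun ω => c - Y ω := by
        refine (ae_restrict_iff' hA).mpr ?_
        have hnB : ∀ᵐ ω ∂μ, ω ∉ B := measure_eq_zero_iff_ae_notMem.mp hB0
        filter_upwards [hnB] with ω hω hmem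
        simp only [Pi.zero_apply]
        by_contra hlt
        exact hω ⟨hmem, by push_neg at hlt; simpa using by linarith⟩
      have hzero : ∫ ω in A, (c - Y ω) ∂μ = 0 := by
        rw [integral_sub (integrable_const c).integrableOn hYint.integrableOn,
          hAY, hcA, setIntegral_const]
        simp [smul_eq_mul, mul_comm]
        exact sub_self _
      have h1 := (integral_eq_zero_iff_of_nonneg_ae hae
        (((integrable_const c).sub hYint).integrableOn)).mp hzero
      have h2 : ∀ᵐ ω ∂μ, ω ∈ A → c - Y ω = (0 : Ω → ℝ) ω := (ae_restrict_iff' hA).mp h1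
      filter_upwards [h2] with ω hω hmem
      have := hω hmem
      simp only [Pi.zero_apply] at this
      linarith
    · -- Y ≥ c a.e. on A
      have hae : 0 ≤ᵐ[μ.restrict A] fun ω => Y ω - c := by
        refine (ae_restrict_iff' hA).mpr ?_
        have hnC : ∀ᵐ ω ∂μ, ω ∉ C := measure_eq_zero_iff_ae_notMem.mp hC0
        filter_upwards [hnC] with ω hω hmem
        simp only [Pi.zero_apply]
        by_contra hlt
        exact hω ⟨hmem, by push_neg at hlt; simpa using by linarith⟩
      have hzero : ∫ ω in A, (Y ω - c) ∂μ = 0 := by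
        rw [integral_sub hYint.integrableOn (integrable_const c).integrableOn,
          hAY, hcA, setIntegral_const]
        simp [smul_eq_mul, mul_comm]
        exact sub_self _
      have h1 := (integral_eq_zero_iff_of_nonneg_ae hae
        ((hYint.sub (integrable_const c)).integrableOn)).mp hzero
      have h2 : ∀ᵐ ω ∂μ, ω ∈ A → Y ω - c = (0 : Ω → ℝ) ω := (ae_restrict_iff' hA).mp h1
      filter_upwards [h2] with ω hω hmem
      have := hω hmem
      simp only [Pi.zero_apply] at this
      linarith
  filter_upwards [hXY, key] with ω h1 h2 hmem
  rw [h1]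
  exact h2 hmem
end

section
/- Let (Ω, F, P) be atomless, ξ ∈ L²(Ω, ℝ) a discrete random variable with P(ξ = x_i) = p_i for distinct values x_i, and let F : L²(Ω, ℝ) → ℝ be law-invariant and Fréchet differentiable at ξ with gradient DF(ξ) ∈ L²(Ω, ℝ). Then for each i, DF(ξ) is P-almost surely constant on the event {ξ = x_i}. Consequently DF(ξ) = g(ξ) a.s. for a deterministic function g defined on the values {x_i}. -/
open MeasureTheory Filter Topology
open scoped ENNReal

section Helpers

variable {Ω : Type*} [MeasurableSpace Ω]

lemma my_half (μ : Measure Ω) [IsFiniteMeasure μ]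
    (hat : ∀ s : Set Ω, MeasurableSet s → 0 < μ s →
      ∃ t ⊆ s, MeasurableSet t ∧ 0 < μ t ∧ μ t < μ s)
    (s : Set Ω) (hs : MeasurableSet s) (h0 : 0 < μ s) :
    ∃ t ⊆ s, MeasurableSet t ∧ 0 < μ t ∧ μ t ≤ μ s / 2 := by
  obtain ⟨t, hts, htm, ht0, htlt⟩ := hat s hs h0
  by_cases hle : μ t ≤ μ s / 2
  · exact ⟨t, hts, htm, ht0, hle⟩
  · have hd : μ (s \ t) = μ s - μ t :=
      measure_diff hts htm.nullMeasurableSet (measure_ne_top μ t)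
    refine ⟨s \ t, Set.diff_subset, hs.diff htm, ?_, ?_⟩
    · rw [hd]; exact tsub_pos_of_lt htlt
    · rw [hd]
      have h2 : μ s / 2 ≤ μ t := (lt_of_not_ge hle).le
      calc μ s - μ t ≤ μ s - μ s / 2 := tsub_le_tsub_left h2 _
        _ = μ s / 2 := ENNReal.sub_half (measure_ne_top μ s)

lemma my_small (μ : Measure Ω) [IsFiniteMeasure μ]
    (hat : ∀ s : Set Ω, MeasurableSet s → 0 < μ s →
      ∃ t ⊆ s, MeasurableSet t ∧ 0 < μ t ∧ μ t < μ s)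
    (s : Set Ω) (hs : MeasurableSet s) (h0 : 0 < μ s) (δ : ℝ≥0∞) (hδ : 0 < δ) :
    ∃ t ⊆ s, MeasurableSet t ∧ 0 < μ t ∧ μ t ≤ δ := by
  have iter : ∀ n : ℕ, ∃ t, t ⊆ s ∧ MeasurableSet t ∧ 0 < μ t ∧ μ t ≤ μ s * 2⁻¹ ^ n := by
    intro n; induction n with
    | zero => exact ⟨s, subset_rfl, hs, h0, by simp⟩
    | succ n ih =>
      obtain ⟨t, hts, htm, ht0, htle⟩ := ih
      obtain ⟨u, hut, hum, hu0, hule⟩ := my_half μ hat t htm ht0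
      refine ⟨u, hut.trans hts, hum, hu0, ?_⟩
      calc μ u ≤ μ t / 2 := hule
        _ ≤ (μ s * 2⁻¹ ^ n) / 2 := by gcongr
        _ = μ s * 2⁻¹ ^ (n+1) := by
            rw [pow_succ, div_eq_mul_inv, mul_assoc]
  obtain ⟨n, hn⟩ := ENNReal.exists_inv_two_pow_lt
    ((ENNReal.div_pos hδ.ne' (measure_ne_top μ s)).ne')
  obtain ⟨t, hts, htm, ht0, htle⟩ := iter n
  refine ⟨t, hts, htm, ht0, ?_⟩
  calc μ t ≤ μ s * 2⁻¹ ^ n := htle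
    _ ≤ μ s * (δ / μ s) := mul_le_mul_right hn.le _
    _ ≤ δ := ENNReal.mul_div_le

lemma my_sierpinski (μ : Measure Ω) [IsFiniteMeasure μ]
    (hat : ∀ s : Set Ω, MeasurableSet s → 0 < μ s →
      ∃ t ⊆ s, MeasurableSet t ∧ 0 < μ t ∧ μ t < μ s)
    (s : Set Ω) (hs : MeasurableSet s) (r : ℝ≥0∞) (hr : r ≤ μ s) :
    ∃ t ⊆ s, MeasurableSet t ∧ μ t = r := by
  classical
  have hrtop : r ≠ ∞ := (hr.trans_lt (measure_lt_top μ s)).ne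
  set 𝒮 : Set (Set Ω) := {t | t ⊆ s ∧ MeasurableSet t ∧ μ t ≤ r} with h𝒮
  set D : Set Ω → ℝ≥0∞ := fun t => ⨆ u : {u : Set Ω // u ∈ 𝒮 ∧ t ⊆ u}, μ u.1 with hD
  have hDle : ∀ t, D t ≤ r := fun t => iSup_le fun u => u.2.1.2.2
  have hDge : ∀ t u, u ∈ 𝒮 → t ⊆ u → μ u ≤ D t := fun t u hu htu =>
    le_iSup_of_le ⟨u, hu, htu⟩ le_rfl
  have key : ∀ n : ℕ, ∀ t : {t : Set Ω // t ∈ 𝒮},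
      ∃ t' : {t : Set Ω // t ∈ 𝒮}, t.1 ⊆ t'.1 ∧ D t.1 ≤ μ t'.1 + 2⁻¹ ^ n := by
    rintro n ⟨t, ht⟩
    by_cases hcase : D t ≤ μ t + 2⁻¹ ^ n
    · exact ⟨⟨t, ht⟩, subset_rfl, hcase⟩
    · push_neg at hcase
      have hεt : (2⁻¹ : ℝ≥0∞) ^ n ≤ D t := (le_add_self.trans_lt hcase).le
      have hε : (2⁻¹ : ℝ≥0∞) ^ n ≠ ∞ := by simp
      have h1 : D t - 2⁻¹ ^ n < D t := by
        apply ENNReal.sub_lt_self ((hDle t).trans_lt (lt_of_le_of_lt hr (measure_lt_top μ s))).ne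
        · exact fun h => by simp [h] at hcase
        · exact pow_ne_zero n (by norm_num)
      obtain ⟨u, hu⟩ := lt_iSup_iff.mp h1
      refine ⟨⟨u.1, u.2.1⟩, u.2.2, ?_⟩
      exact ((ENNReal.sub_lt_iff_lt_right hε hεt).mp hu).le
  choose step hsub hstep using key
  let T : ℕ → {t : Set Ω // t ∈ 𝒮} := fun n =>
    Nat.rec ⟨∅, Set.empty_subset s, MeasurableSet.empty, by simp⟩ (fun n ih => step n ih) n
  have hTs : ∀ n, T (n + 1) = step n (T n) := fun n => rfl
  set tU := ⋃ n, (T n).1 with htU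
  have htUs : tU ⊆ s := Set.iUnion_subset fun n => (T n).2.1
  have htUm : MeasurableSet tU := MeasurableSet.iUnion fun n => (T n).2.2.1
  have hmono' : Monotone fun n => (T n).1 := monotone_nat_of_le_succ fun n => hsub n (T n)
  have hμtU : μ tU = ⨆ n, μ (T n).1 := Directed.measure_iUnion hmono'.directed_le
  have htUr : μ tU ≤ r := by rw [hμtU]; exact iSup_le fun n => (T n).2.2.2
  rcases eq_or_lt_of_le htUr with heq | hlt
  · exact ⟨tU, htUs, htUm, heq⟩
  exfalso
  have hpos : 0 < μ (s \ tU) := by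
    rcases (show 0 ≤ μ (s \ tU) from zero_le).eq_or_lt with h | h
    · exfalso
      have : μ s ≤ μ tU + μ (s \ tU) := by
        conv_lhs => rw [← Set.union_diff_cancel htUs]
        exact measure_union_le _ _
      rw [← h, add_zero] at this
      exact absurd (this.trans_lt hlt) (not_lt.mpr hr)
    · exact h
  obtain ⟨u, hus, hum, hu0, hule⟩ :=
    my_small μ hat _ (hs.diff htUm) hpos (r - μ tU) (tsub_pos_of_lt hlt)
  have hufin : μ u ≠ ∞ := measure_ne_top μ u
  have hkey : ∀ n, μ (T n).1 + μ u ≤ μ (T (n + 1)).1 + 2⁻¹ ^ n := by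
    intro n
    have hdisj : Disjoint (T n).1 u :=
      Set.disjoint_of_subset (Set.subset_iUnion (fun k => (T k).1) n) hus
        Set.disjoint_sdiff_right
    have hmem : (T n).1 ∪ u ∈ 𝒮 := by
      refine ⟨Set.union_subset (T n).2.1 (hus.trans Set.diff_subset),
        (T n).2.2.1.union hum, ?_⟩
      rw [measure_union hdisj hum]
      calc μ (T n).1 + μ u ≤ μ tU + (r - μ tU) :=
            add_le_add (measure_mono (Set.subset_iUnion (fun k => (T k).1) n)) hule
        _ = r := add_tsub_cancel_of_le hlt.le
    calc μ (T n).1 + μ u = μ ((T n).1 ∪ u) := (measure_union hdisj hum).symm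
      _ ≤ D (T n).1 := hDge _ _ hmem Set.subset_union_left
      _ ≤ μ (T (n + 1)).1 + 2⁻¹ ^ n := by rw [hTs]; exact hstep n (T n)
  have htel : ∀ n : ℕ, (n : ℝ≥0∞) * μ u ≤ μ (T n).1 + ∑ k ∈ Finset.range n, (2⁻¹ : ℝ≥0∞) ^ k := by
    intro n; induction n with
    | zero => simp
    | succ n ih =>
      have h1 : ((n : ℕ) + 1 : ℝ≥0∞) * μ u = (n : ℝ≥0∞) * μ u + μ u := by ring
      push_cast
      rw [h1]
      calc (n : ℝ≥0∞) * μ u + μ u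
          ≤ (μ (T n).1 + ∑ k ∈ Finset.range n, (2⁻¹ : ℝ≥0∞) ^ k) + μ u := add_le_add_left ih _
        _ = (μ (T n).1 + μ u) + ∑ k ∈ Finset.range n, (2⁻¹ : ℝ≥0∞) ^ k := by ring
        _ ≤ (μ (T (n + 1)).1 + 2⁻¹ ^ n) + ∑ k ∈ Finset.range n, (2⁻¹ : ℝ≥0∞) ^ k :=
            add_le_add_left (hkey n) _
        _ = μ (T (n + 1)).1 + ∑ k ∈ Finset.range (n + 1), (2⁻¹ : ℝ≥0∞) ^ k := by
            rw [Finset.sum_range_succ]; ring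
  have hsum : ∀ n, ∑ k ∈ Finset.range n, (2⁻¹ : ℝ≥0∞) ^ k ≤ 2 := by
    intro n
    have h := ENNReal.sum_le_tsum (f := fun k => (2⁻¹ : ℝ≥0∞) ^ k) (Finset.range n)
    rwa [ENNReal.tsum_geometric, ENNReal.one_sub_inv_two, inv_inv] at h
  have hbound : ∀ n : ℕ, (n : ℝ≥0∞) * μ u ≤ μ s + 2 := fun n =>
    (htel n).trans (add_le_add (measure_mono (T n).2.1) (hsum n))
  obtain ⟨n, hn⟩ := ENNReal.exists_nat_gt
    (ENNReal.div_lt_top (x := μ s + 2) (y := μ u) (by finiteness) hu0.ne').ne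
  rw [ENNReal.div_lt_iff (Or.inl hu0.ne') (Or.inl hufin)] at hn
  exact absurd (hbound n) (not_le.mpr hn)

open scoped Classical in
lemma my_pre (μ : Measure Ω) [IsProbabilityMeasure μ] (ξ : Ω → ℝ) (hξm : Measurable ξ)
    (a : ℝ) (B : Set Ω) (hB : MeasurableSet B) (hBsub : B ⊆ {ω | ξ ω = a})
    (ε : ℝ) (S : Set ℝ) (hS : MeasurableSet S) :
    μ ((ξ + ε • B.indicator (fun _ => (1:ℝ))) ⁻¹' S)
      = (if a + ε ∈ S then μ B else 0)
        + (μ (ξ ⁻¹' S) - (if a ∈ S then μ B else 0)) := by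
  classical
  have hset : (ξ + ε • B.indicator (fun _ => (1:ℝ))) ⁻¹' S
      = (if a + ε ∈ S then B else ∅) ∪ (ξ ⁻¹' S \ B) := by
    ext ω
    by_cases hω : ω ∈ B
    · have hξω : ξ ω = a := hBsub hω
      by_cases hc : a + ε ∈ S <;>
        simp [Set.mem_preimage, Pi.add_apply, Pi.smul_apply, Set.indicator_of_mem hω,
          hξω, hω, smul_eq_mul, hc]
    · by_cases hc : a + ε ∈ S <;>
        simp [Set.mem_preimage, Pi.add_apply, Pi.smul_apply, Set.indicator_of_notMem hω,
          hω, smul_eq_mul, hc]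
  have hdisj : Disjoint (if a + ε ∈ S then B else ∅) (ξ ⁻¹' S \ B) := by
    refine Set.disjoint_of_subset ?_ subset_rfl Set.disjoint_sdiff_right
    split <;> simp
  rw [hset, measure_union hdisj ((hξm hS).diff hB), apply_ite μ, measure_empty]
  congr 1
  by_cases hc : a ∈ S
  · have hBsub' : B ⊆ ξ ⁻¹' S := fun ω hω => by
      simp only [Set.mem_preimage]; rw [hBsub hω]; exact hc
    rw [measure_diff hBsub' hB.nullMeasurableSet (measure_ne_top μ B), if_pos hc]
  · have hd : ξ ⁻¹' S \ B = ξ ⁻¹' S := by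
      ext ω; constructor
      · exact fun h => h.1
      · exact fun h => ⟨h, fun hωB => hc (by rw [← hBsub hωB]; exact h)⟩
    rw [hd, if_neg hc, tsub_zero]

end Helpers

/-- For a discrete random variable `ξ` and a law-invariant, Fréchet differentiable `F`,
the gradient `DF(ξ)` is a.s. constant on each level set `{ξ = x i}`, and hence
`DF(ξ) = g(ξ)` a.s. for a deterministic function `g`. -/
theorem frechet_gradient_constant_on_level_sets
    {Ω : Type*} [MeasurableSpace Ω] (μ : Measure Ω) [IsProbabilityMeasure μ]
    (hatomless : ∀ s : Set Ω, MeasurableSet s → 0 < μ s →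
      ∃ t ⊆ s, MeasurableSet t ∧ 0 < μ t ∧ μ t < μ s)
    (ξ : Ω → ℝ) (hξ : MemLp ξ 2 μ) (hξm : Measurable ξ)
    (x : ℕ → ℝ) (hx : Function.Injective x)
    (p : ℕ → ℝ≥0∞) (hp : ∀ i, μ {ω | ξ ω = x i} = p i)
    (hdiscrete : ∀ᵐ ω ∂μ, ∃ i, ξ ω = x i)
    (F : (Ω → ℝ) → ℝ)
    (hlaw : ∀ ζ ζ' : Ω → ℝ, MemLp ζ 2 μ → MemLp ζ' 2 μ →
      Measure.map ζ μ = Measure.map ζ' μ → F ζ = F ζ')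
    (DFξ : Ω → ℝ) (hDFξ : MemLp DFξ 2 μ)
    (hdiff : ∀ η : Ω → ℝ, MemLp η 2 μ →
      Tendsto (fun ε : ℝ => (F (ξ + ε • η) - F ξ) / ε) (𝓝[≠] 0)
        (𝓝 (∫ ω, DFξ ω * η ω ∂μ))) :
    (∀ i : ℕ, ∃ c : ℝ, ∀ᵐ ω ∂μ, ξ ω = x i → DFξ ω = c) ∧
    ∃ g : ℝ → ℝ, ∀ᵐ ω ∂μ, DFξ ω = g (ξ ω) := by
  classical
  obtain ⟨f, hfmeas, hff⟩ : ∃ f : Ω → ℝ, Measurable f ∧ DFξ =ᵐ[μ] f := by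
    have h := hDFξ.aestronglyMeasurable
    exact ⟨h.mk DFξ, h.stronglyMeasurable_mk.measurable, h.ae_eq_mk⟩
  have hint : Integrable DFξ μ := hDFξ.integrable one_le_two
  have hfint : Integrable f μ := hint.congr hff
  -- the swap lemma: set integrals over equal-measure subsets of a level set agree
  have swap : ∀ (a : ℝ) (B C : Set Ω), MeasurableSet B → MeasurableSet C →
      B ⊆ {ω | ξ ω = a} → C ⊆ {ω | ξ ω = a} → μ B = μ C →
      ∫ ω in B, DFξ ω ∂μ = ∫ ω in C, DFξ ω ∂μ := by
    intro a B C hB hC hBs hCs hBC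
    set ηB := B.indicator (fun _ => (1:ℝ)) with hηB
    set ηC := C.indicator (fun _ => (1:ℝ)) with hηC
    have hmB : MemLp ηB 2 μ := memLp_indicator_const 2 hB 1 (Or.inr (measure_ne_top μ B))
    have hmC : MemLp ηC 2 μ := memLp_indicator_const 2 hC 1 (Or.inr (measure_ne_top μ C))
    have hFeq : ∀ ε : ℝ, F (ξ + ε • ηB) = F (ξ + ε • ηC) := by
      intro ε
      apply hlaw _ _ (hξ.add (hmB.const_smul ε)) (hξ.add (hmC.const_smul ε))
      have hmesB : Measurable (ξ + ε • ηB) :=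
        hξm.add (((measurable_const (a := (1:ℝ))).indicator hB).const_smul ε)
      have hmesC : Measurable (ξ + ε • ηC) :=
        hξm.add (((measurable_const (a := (1:ℝ))).indicator hC).const_smul ε)
      ext S hS
      rw [Measure.map_apply hmesB hS, Measure.map_apply hmesC hS,
        my_pre μ ξ hξm a B hB hBs ε S hS, my_pre μ ξ hξm a C hC hCs ε S hS, hBC]
    have h1 := hdiff ηB hmB
    have h2 := hdiff ηC hmC
    have heqfun : (fun ε : ℝ => (F (ξ + ε • ηB) - F ξ) / ε)
        = fun ε : ℝ => (F (ξ + ε • ηC) - F ξ) / ε := funext fun ε => by rw [hFeq ε]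
    rw [heqfun] at h1
    have hIeq : ∫ ω, DFξ ω * ηB ω ∂μ = ∫ ω, DFξ ω * ηC ω ∂μ := tendsto_nhds_unique h1 h2
    have hind : ∀ (B' : Set Ω), MeasurableSet B' →
        ∫ ω, DFξ ω * B'.indicator (fun _ => (1:ℝ)) ω ∂μ = ∫ ω in B', DFξ ω ∂μ := by
      intro B' hB'
      rw [← integral_indicator hB']
      congr 1; ext ω
      by_cases hω : ω ∈ B' <;>
        simp [Set.indicator_of_mem, Set.indicator_of_notMem, hω]
    rw [hηB, hηC, hind B hB, hind C hC] at hIeq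
    exact hIeq
  have const : ∀ i : ℕ, ∃ c : ℝ, ∀ᵐ ω ∂μ, ξ ω = x i → DFξ ω = c := by
    intro i
    set A := {ω | ξ ω = x i} with hAdef
    have hAm : MeasurableSet A := hξm (measurableSet_singleton (x i))
    by_cases h0' : μ A = 0
    · refine ⟨0, ?_⟩
      rw [ae_iff]
      refine measure_mono_null ?_ h0'
      intro ω hω
      simp only [Set.mem_setOf_eq, Classical.not_imp] at hω
      exact hω.1
    · have h0 : 0 < μ A := zero_lt_iff.mpr h0'
      have key : ∀ q : ℝ, μ (A ∩ {ω | q < f ω}) = 0 ∨ μ (A ∩ {ω | f ω < q}) = 0 := by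
        intro q
        by_contra hcon
        push_neg at hcon
        obtain ⟨hS0, hT0⟩ := hcon
        have hSU : A ∩ {ω | q < f ω} = ⋃ n : ℕ, A ∩ {ω | q + 1/(n+1) ≤ f ω} := by
          ext ω
          simp only [Set.mem_inter_iff, Set.mem_setOf_eq, Set.mem_iUnion]
          constructor
          · rintro ⟨h1, h2⟩
            obtain ⟨n, hn⟩ := exists_nat_one_div_lt (sub_pos.mpr h2)
            exact ⟨n, h1, by push_cast at hn ⊢; linarith⟩
          · rintro ⟨n, h1, hn⟩
            have hpos : (0:ℝ) < 1/((n:ℝ)+1) := by positivity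
            exact ⟨h1, by linarith⟩
        have hTU : A ∩ {ω | f ω < q} = ⋃ n : ℕ, A ∩ {ω | f ω ≤ q - 1/(n+1)} := by
          ext ω
          simp only [Set.mem_inter_iff, Set.mem_setOf_eq, Set.mem_iUnion]
          constructor
          · rintro ⟨h1, h2⟩
            obtain ⟨n, hn⟩ := exists_nat_one_div_lt (sub_pos.mpr h2)
            exact ⟨n, h1, by push_cast at hn ⊢; linarith⟩
          · rintro ⟨n, h1, hn⟩
            have hpos : (0:ℝ) < 1/((n:ℝ)+1) := by positivity
            exact ⟨h1, by linarith⟩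
        obtain ⟨n, hn⟩ : ∃ n : ℕ, μ (A ∩ {ω | q + 1/(n+1) ≤ f ω}) ≠ 0 := by
          by_contra hall; push_neg at hall
          exact hS0 (by rw [hSU]; exact measure_iUnion_null hall)
        obtain ⟨m, hm⟩ : ∃ m : ℕ, μ (A ∩ {ω | f ω ≤ q - 1/(m+1)}) ≠ 0 := by
          by_contra hall; push_neg at hall
          exact hT0 (by rw [hTU]; exact measure_iUnion_null hall)
        set Sn := A ∩ {ω | q + 1/(n+1) ≤ f ω} with hSn
        set Tm := A ∩ {ω | f ω ≤ q - 1/(m+1)} with hTm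
        have hSnm : MeasurableSet Sn := hAm.inter (measurableSet_le measurable_const hfmeas)
        have hTmm : MeasurableSet Tm := hAm.inter (measurableSet_le hfmeas measurable_const)
        set r := min (μ Sn) (μ Tm) with hrdef
        have hr0 : 0 < r := lt_min (zero_lt_iff.mpr hn) (zero_lt_iff.mpr hm)
        obtain ⟨B, hBS, hBmeas, hBr⟩ := my_sierpinski μ hatomless Sn hSnm r (min_le_left _ _)
        obtain ⟨C, hCT, hCmeas, hCr⟩ := my_sierpinski μ hatomless Tm hTmm r (min_le_right _ _)
        have hswap := swap (x i) B C hBmeas hCmeas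
          (fun ω hω => (hBS hω).1) (fun ω hω => (hCT hω).1) (hBr.trans hCr.symm)
        have hBf : ∫ ω in B, DFξ ω ∂μ = ∫ ω in B, f ω ∂μ :=
          setIntegral_congr_ae hBmeas (hff.mono fun ω h _ => h)
        have hCf : ∫ ω in C, DFξ ω ∂μ = ∫ ω in C, f ω ∂μ :=
          setIntegral_congr_ae hCmeas (hff.mono fun ω h _ => h)
        have hrt : (0:ℝ) < r.toReal := ENNReal.toReal_pos hr0.ne'
          ((min_le_left _ _).trans_lt (measure_lt_top μ Sn)).ne
        have hlow : (q + 1/(n+1)) * r.toReal ≤ ∫ ω in B, f ω ∂μ := by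
          have h1 : ∫ _ω in B, (q + 1/(n+1)) ∂μ ≤ ∫ ω in B, f ω ∂μ :=
            setIntegral_mono_on (integrableOn_const (measure_lt_top μ B).ne)
              hfint.integrableOn hBmeas (fun ω hω => (hBS hω).2)
          rwa [setIntegral_const, measureReal_def, hBr, smul_eq_mul, mul_comm] at h1
        have hhigh : ∫ ω in C, f ω ∂μ ≤ (q - 1/(m+1)) * r.toReal := by
          have h1 : ∫ ω in C, f ω ∂μ ≤ ∫ _ω in C, (q - 1/(m+1)) ∂μ :=
            setIntegral_mono_on hfint.integrableOn
              (integrableOn_const (measure_lt_top μ C).ne)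
              hCmeas (fun ω hω => (hCT hω).2)
          rwa [setIntegral_const, measureReal_def, hCr, smul_eq_mul, mul_comm] at h1
        have hcontra : (q + 1/(n+1)) * r.toReal ≤ (q - 1/(m+1)) * r.toReal := by
          calc (q + 1/(n+1)) * r.toReal ≤ ∫ ω in B, f ω ∂μ := hlow
            _ = ∫ ω in B, DFξ ω ∂μ := hBf.symm
            _ = ∫ ω in C, DFξ ω ∂μ := hswap
            _ = ∫ ω in C, f ω ∂μ := hCf
            _ ≤ (q - 1/(m+1)) * r.toReal := hhigh
        have hqlt : q - 1/(m+1) < q + 1/(n+1) := by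
          have h1 : (0:ℝ) < 1/(n+1) := by positivity
          have h2 : (0:ℝ) < 1/(m+1) := by positivity
          linarith
        exact absurd hcontra (not_le.mpr (mul_lt_mul_of_pos_right hqlt hrt))
      -- build the constant from the dichotomy
      set L := {q : ℚ | μ (A ∩ {ω | f ω < q}) = 0} with hLdef
      set U := {q : ℚ | μ (A ∩ {ω | (q:ℝ) < f ω}) = 0} with hUdef
      have hLU : ∀ q : ℚ, q ∈ L ∨ q ∈ U := fun q => (key q).symm
      have hUne : U.Nonempty := by
        by_contra hU
        rw [Set.not_nonempty_iff_eq_empty] at hU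
        have hallL : ∀ q : ℚ, μ (A ∩ {ω | f ω < q}) = 0 := fun q =>
          (hLU q).resolve_right (by simp [hU])
        have hcover : A ⊆ ⋃ q : ℚ, A ∩ {ω | f ω < q} := by
          intro ω hω
          obtain ⟨q, hq⟩ := exists_rat_gt (f ω)
          exact Set.mem_iUnion.mpr ⟨q, hω, hq⟩
        exact h0' (measure_mono_null hcover (measure_iUnion_null hallL))
      have hLne : L.Nonempty := by
        by_contra hL
        rw [Set.not_nonempty_iff_eq_empty] at hL
        have hallU : ∀ q : ℚ, μ (A ∩ {ω | (q:ℝ) < f ω}) = 0 := fun q =>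
          (hLU q).resolve_left (by simp [hL])
        have hcover : A ⊆ ⋃ q : ℚ, A ∩ {ω | (q:ℝ) < f ω} := by
          intro ω hω
          obtain ⟨q, hq⟩ := exists_rat_lt (f ω)
          exact Set.mem_iUnion.mpr ⟨q, hω, hq⟩
        exact h0' (measure_mono_null hcover (measure_iUnion_null hallU))
      have hLleU : ∀ q' ∈ L, ∀ q ∈ U, (q' : ℚ) ≤ q := by
        intro q' hq' q hq
        by_contra hlt
        push_neg at hlt
        have hcover : A ⊆ (A ∩ {ω | f ω < (q':ℝ)}) ∪ (A ∩ {ω | (q:ℝ) < f ω}) := by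
          intro ω hω
          rcases lt_or_ge (f ω) (q' : ℝ) with h | h
          · exact Or.inl ⟨hω, h⟩
          · exact Or.inr ⟨hω, lt_of_lt_of_le (by exact_mod_cast hlt) h⟩
        exact h0' (measure_mono_null hcover (measure_union_null hq' hq))
      set c := sInf ((fun q : ℚ => (q:ℝ)) '' U) with hcdef
      have hUne' : ((fun q : ℚ => (q:ℝ)) '' U).Nonempty := hUne.image _
      have hbdd : BddBelow ((fun q : ℚ => (q:ℝ)) '' U) := by
        obtain ⟨q', hq'⟩ := hLne
        refine ⟨(q' : ℝ), ?_⟩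
        rintro y ⟨q, hq, rfl⟩
        show (q' : ℝ) ≤ (q : ℝ)
        exact_mod_cast hLleU q' hq' q hq
      have hup : μ (A ∩ {ω | c < f ω}) = 0 := by
        refine measure_mono_null ?_
          (measure_iUnion_null (s := fun q : ℚ => ⋃ _ : q ∈ U, A ∩ {ω | (q:ℝ) < f ω})
            fun q => measure_iUnion_null fun hq => hq)
        rintro ω ⟨hωA, hωc⟩
        obtain ⟨y, ⟨q, hqU, rfl⟩, hy⟩ := exists_lt_of_csInf_lt hUne' (show c < f ω from hωc)
        exact Set.mem_iUnion.mpr ⟨q, Set.mem_iUnion.mpr ⟨hqU, hωA, hy⟩⟩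
      have hdown : μ (A ∩ {ω | f ω < c}) = 0 := by
        refine measure_mono_null ?_
          (measure_iUnion_null (s := fun q : ℚ => ⋃ _ : q ∈ L, A ∩ {ω | f ω < (q:ℝ)})
            fun q => measure_iUnion_null fun hq => hq)
        rintro ω ⟨hωA, hωc⟩
        obtain ⟨q, hq1, hq2⟩ := exists_rat_btwn (show f ω < c from hωc)
        have hqL : q ∈ L := by
          refine (hLU q).resolve_right fun hqU => ?_
          exact absurd (csInf_le hbdd ⟨q, hqU, rfl⟩) (not_le.mpr hq2)
        exact Set.mem_iUnion.mpr ⟨q, Set.mem_iUnion.mpr ⟨hqL, hωA, hq1⟩⟩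
      refine ⟨c, ?_⟩
      have hnull : μ (A ∩ {ω | f ω ≠ c}) = 0 := by
        refine measure_mono_null ?_ (measure_union_null hdown hup)
        rintro ω ⟨hωA, hωne⟩
        rcases lt_or_gt_of_ne hωne with h | h
        · exact Or.inl ⟨hωA, h⟩
        · exact Or.inr ⟨hωA, h⟩
      have h1 : ∀ᵐ ω ∂μ, ω ∉ A ∩ {ω | f ω ≠ c} := by
        rw [ae_iff]
        simp only [not_not, Set.setOf_mem_eq]; exact hnull
      filter_upwards [h1, hff] with ω hω hfω hξω
      have hfc : f ω = c := by
        by_contra hne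
        exact hω ⟨hξω, hne⟩
      rw [hfω, hfc]
  refine ⟨const, ?_⟩
  choose c hc using const
  refine ⟨fun y => if h : ∃ j, x j = y then c h.choose else 0, ?_⟩
  have hall : ∀ᵐ ω ∂μ, ∀ i, ξ ω = x i → DFξ ω = c i := ae_all_iff.mpr hc
  filter_upwards [hall, hdiscrete] with ω h1 h2
  obtain ⟨i, hi⟩ := h2
  have hex : ∃ j, x j = ξ ω := ⟨i, hi.symm⟩
  rw [dif_pos hex]
  exact h1 hex.choose hex.choose_spec.symm
end

section
/- Let ξ be discrete with P(ξ = x_i) = p_i > 0, let F : L²(Ω, ℝ) → ℝ be law-invariant with lifting f on probability measures (F(ξ) = f(L_ξ)), and suppose F is Fréchet differentiable at ξ. Then for each i, the value g(x_i) of the Wasserstein derivative satisfies g(x_i) = lim_{ε→0} [f(Σ_{j≠i} p_j δ_{x_j} + p_i δ_{x_i+ε}) − f(Σ_j p_j δ_{x_j})] / (ε p_i), i.e., DF(ξ) equals this limit almost surely on {ξ = x_i}. -/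
open MeasureTheory Filter Topology
open scoped ENNReal

section Helpers

lemma wddf_map_discrete {Ω : Type*} [MeasurableSpace Ω] (μ : Measure Ω)
    {ι : Type*} [Countable ι] {ζ : Ω → ℝ} (hζ : Measurable ζ)
    {A : ι → Set Ω} (hAm : ∀ k, MeasurableSet (A k))
    (hd : Pairwise (Function.onFun Disjoint A))
    {y : ι → ℝ} (hconst : ∀ k, ∀ ω ∈ A k, ζ ω = y k)
    (hcov : ∀ᵐ ω ∂μ, ∃ k, ω ∈ A k) :
    Measure.map ζ μ = Measure.sum (fun k => μ (A k) • Measure.dirac (y k)) := by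
  ext E hE
  rw [Measure.map_apply hζ hE, Measure.sum_apply _ hE]
  have hU : μ ((⋃ k, A k)ᶜ) = 0 := by
    have h1 : μ {ω | ¬ ∃ k, ω ∈ A k} = 0 := ae_iff.mp hcov
    have h2 : {ω | ¬ ∃ k, ω ∈ A k} = (⋃ k, A k)ᶜ := by
      ext ω; simp [Set.mem_iUnion]
    rwa [h2] at h1
  calc μ (ζ ⁻¹' E) = μ (ζ ⁻¹' E ∩ ⋃ k, A k) := (measure_inter_conull hU).symm
    _ = μ (⋃ k, ζ ⁻¹' E ∩ A k) := by rw [Set.inter_iUnion]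
    _ = ∑' k, μ (ζ ⁻¹' E ∩ A k) := by
        refine measure_iUnion (hd.mono fun k l h => h.mono inf_le_right inf_le_right)
          (fun k => (hζ hE).inter (hAm k))
    _ = ∑' k, (μ (A k) • Measure.dirac (y k)) E := by
        refine tsum_congr fun k => ?_
        rw [Measure.smul_apply, Measure.dirac_apply' _ hE, smul_eq_mul]
        by_cases hy : y k ∈ E
        · rw [Set.indicator_of_mem hy, Pi.one_apply, mul_one]
          congr 1
          refine Set.Subset.antisymm Set.inter_subset_right fun ω hω => ⟨?_, hω⟩
          simp only [Set.mem_preimage]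
          rw [hconst k ω hω]; exact hy
        · rw [Set.indicator_of_notMem hy, mul_zero]
          have : ζ ⁻¹' E ∩ A k = ∅ := by
            ext ω
            simp only [Set.mem_inter_iff, Set.mem_preimage, Set.mem_empty_iff_false, iff_false]
            rintro ⟨h1, h2⟩
            exact hy (hconst k ω h2 ▸ h1)
          rw [this, measure_empty]

variable {Ω : Type*} [MeasurableSpace Ω] (μ : Measure Ω) [IsProbabilityMeasure μ]
variable (hatomless : ∀ s : Set Ω, MeasurableSet s → 0 < μ s →
      ∃ t ⊆ s, MeasurableSet t ∧ 0 < μ t ∧ μ t < μ s)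

include hatomless in
lemma wddf_half {s : Set Ω} (hs : MeasurableSet s) (h0 : 0 < μ s) :
    ∃ t ⊆ s, MeasurableSet t ∧ 0 < μ t ∧ μ t ≤ μ s / 2 := by
  obtain ⟨u, hus, hum, hu0, hult⟩ := hatomless s hs h0
  rcases le_or_gt (μ u) (μ s / 2) with h | h
  · exact ⟨u, hus, hum, hu0, h⟩
  · refine ⟨s \ u, Set.diff_subset, hs.diff hum, ?_, ?_⟩
    · rw [measure_diff hus hum.nullMeasurableSet (measure_ne_top μ u)]
      exact tsub_pos_iff_lt.mpr hult
    · rw [measure_diff hus hum.nullMeasurableSet (measure_ne_top μ u)]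
      rw [tsub_le_iff_right]
      calc μ s = μ s / 2 + μ s / 2 := (ENNReal.add_halves _).symm
        _ ≤ μ s / 2 + μ u := add_le_add_right h.le _

include hatomless in
lemma wddf_small {s : Set Ω} (hs : MeasurableSet s) (h0 : 0 < μ s) {δ : ℝ≥0∞} (hδ : 0 < δ) :
    ∃ t ⊆ s, MeasurableSet t ∧ 0 < μ t ∧ μ t < δ := by
  have key : ∀ n : ℕ, ∃ t ⊆ s, MeasurableSet t ∧ 0 < μ t ∧ μ t ≤ 2⁻¹ ^ n := by
    intro n
    induction n with
    | zero => exact ⟨s, le_refl _, hs, h0, by simpa using prob_le_one⟩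
    | succ n ih =>
      obtain ⟨t, hts, htm, ht0, htle⟩ := ih
      obtain ⟨u, hut, hum, hu0, hule⟩ := wddf_half μ hatomless htm ht0
      refine ⟨u, hut.trans hts, hum, hu0, ?_⟩
      calc μ u ≤ μ t / 2 := hule
        _ ≤ 2⁻¹ ^ n / 2 := ENNReal.div_le_div_right htle 2
        _ = 2⁻¹ ^ (n + 1) := by rw [div_eq_mul_inv, pow_succ]
  obtain ⟨n, hn⟩ := ENNReal.exists_inv_two_pow_lt hδ.ne'
  obtain ⟨t, hts, htm, ht0, htle⟩ := key n
  exact ⟨t, hts, htm, ht0, lt_of_le_of_lt htle hn⟩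

include hatomless in
lemma wddf_sier {s : Set Ω} (hs : MeasurableSet s) {r : ℝ≥0∞} (hr : r ≤ μ s) :
    ∃ t ⊆ s, MeasurableSet t ∧ μ t = r := by
  classical
  set Q : Set Ω → Set (Set Ω) := fun t =>
    {v | MeasurableSet v ∧ v ⊆ s \ t ∧ μ t + μ v ≤ r} with hQ
  have step : ∀ t : Set Ω, ∃ u : Set Ω,
      (MeasurableSet t ∧ t ⊆ s ∧ μ t ≤ r) →
      (u ∈ Q t ∧ ∀ v ∈ Q t, μ v ≤ 2 * μ u) := by
    intro t
    by_cases h : MeasurableSet t ∧ t ⊆ s ∧ μ t ≤ r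
    swap
    · exact ⟨∅, fun hc => absurd hc h⟩
    set Δ : ℝ≥0∞ := ⨆ v ∈ Q t, μ v with hΔ
    have hΔle : Δ ≤ r := iSup₂_le fun v hv => le_trans le_add_self hv.2.2
    rcases eq_or_ne Δ 0 with h0 | h0
    · refine ⟨∅, fun _ => ⟨⟨MeasurableSet.empty, Set.empty_subset _, by simpa using h.2.2⟩,
        fun v hv => ?_⟩⟩
      have : μ v ≤ Δ := le_iSup₂ (f := fun v _ => μ v) v hv
      simp [h0] at this
      simp [this]
    · have hΔtop : Δ ≠ ∞ :=
        ne_top_of_le_ne_top (ne_top_of_le_ne_top (measure_ne_top μ s) hr) hΔle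
      have hhalf : Δ / 2 < Δ := ENNReal.half_lt_self h0 hΔtop
      have : ∃ v ∈ Q t, Δ / 2 < μ v := by
        by_contra hcon
        push_neg at hcon
        exact absurd (iSup₂_le hcon) (not_le.mpr hhalf)
      obtain ⟨v, hvQ, hvlt⟩ := this
      refine ⟨v, fun _ => ⟨hvQ, fun w hw => ?_⟩⟩
      have h1 : μ w ≤ Δ := le_iSup₂ (f := fun v _ => μ v) w hw
      have h2 : Δ ≤ 2 * μ v := by
        have h3 : 2 * (Δ / 2) = Δ := ENNReal.mul_div_cancel (by norm_num) (by norm_num)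
        calc Δ = 2 * (Δ / 2) := h3.symm
          _ ≤ 2 * μ v := mul_le_mul_right hvlt.le 2
      exact h1.trans h2
  choose U hU using step
  let T : ℕ → Set Ω := fun n => Nat.rec ∅ (fun _ tn => tn ∪ U tn) n
  have hT0 : T 0 = ∅ := rfl
  have hTsucc : ∀ n, T (n + 1) = T n ∪ U (T n) := fun n => rfl
  have hinv : ∀ n, MeasurableSet (T n) ∧ T n ⊆ s ∧ μ (T n) ≤ r := by
    intro n
    induction n with
    | zero => exact ⟨MeasurableSet.empty, Set.empty_subset _,
        by rw [hT0, measure_empty]; exact zero_le⟩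
    | succ n ih =>
      obtain ⟨hQn, -⟩ := hU (T n) ih
      obtain ⟨hm, hsub, hle⟩ := hQn
      refine ⟨ih.1.union hm, Set.union_subset ih.2.1 (hsub.trans Set.diff_subset), ?_⟩
      rw [hTsucc]
      calc μ (T n ∪ U (T n)) ≤ μ (T n) + μ (U (T n)) := measure_union_le _ _
        _ ≤ r := hle
  have hmono : Monotone T := by
    refine monotone_nat_of_le_succ fun n => ?_
    rw [hTsucc]; exact Set.subset_union_left
  have hTm : ∀ n, MeasurableSet (T n) := fun n => (hinv n).1
  set tinf : Set Ω := ⋃ n, T n with htinf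
  have htinfm : MeasurableSet tinf := MeasurableSet.iUnion hTm
  have htinfs : tinf ⊆ s := Set.iUnion_subset fun n => (hinv n).2.1
  have hμtinf : μ tinf ≤ r := by
    rw [htinf, hmono.directed_le.measure_iUnion]
    exact iSup_le fun n => (hinv n).2.2
  rcases eq_or_lt_of_le hμtinf with heq | hlt
  · exact ⟨tinf, htinfs, htinfm, heq⟩
  exfalso
  have hpos : 0 < μ (s \ tinf) := by
    by_contra hcon
    push_neg at hcon
    have h0 : μ (s \ tinf) = 0 := le_antisymm hcon zero_le
    have hle : μ s ≤ μ tinf := by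
      calc μ s ≤ μ (tinf ∪ (s \ tinf)) :=
            measure_mono (by intro ω hω; by_cases h : ω ∈ tinf <;> simp [h, hω])
        _ ≤ μ tinf + μ (s \ tinf) := measure_union_le _ _
        _ = μ tinf := by rw [h0, add_zero]
    exact absurd (hr.trans hle) (not_le.mpr hlt)
  obtain ⟨u, hus, hum, hu0, hult⟩ := wddf_small μ hatomless (hs.diff htinfm) hpos
    (δ := r - μ tinf) (tsub_pos_iff_lt.mpr hlt)
  have huQ : ∀ n, u ∈ Q (T n) := by
    intro n
    refine ⟨hum, hus.trans (Set.diff_subset_diff_right (Set.subset_iUnion T n)), ?_⟩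
    calc μ (T n) + μ u ≤ μ tinf + μ u :=
          add_le_add_left (measure_mono (Set.subset_iUnion T n)) _
      _ ≤ μ tinf + (r - μ tinf) := add_le_add_right hult.le _
      _ = r := add_tsub_cancel_of_le hlt.le
  set c : ℝ≥0∞ := μ u / 2 with hc
  have hc0 : 0 < c := ENNReal.half_pos hu0.ne'
  have hcle : ∀ n, c ≤ μ (U (T n)) := by
    intro n
    obtain ⟨-, hbound⟩ := hU (T n) ⟨(hinv n).1, (hinv n).2.1, (hinv n).2.2⟩
    have h1 := hbound u (huQ n)
    rw [hc, ENNReal.div_le_iff (by norm_num) (by norm_num)]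
    calc μ u ≤ 2 * μ (U (T n)) := h1
      _ = μ (U (T n)) * 2 := mul_comm _ _
  have hgrow : ∀ n : ℕ, (n : ℝ≥0∞) * c ≤ μ (T n) := by
    intro n
    induction n with
    | zero => simp
    | succ n ih =>
      have hdisj : Disjoint (T n) (U (T n)) := by
        obtain ⟨⟨-, hsub, -⟩, -⟩ := hU (T n) ⟨(hinv n).1, (hinv n).2.1, (hinv n).2.2⟩
        exact Set.disjoint_of_subset_right hsub Set.disjoint_sdiff_right
      have hadd : μ (T (n + 1)) = μ (T n) + μ (U (T n)) := by
        rw [hTsucc]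
        exact measure_union hdisj (hU (T n) ⟨(hinv n).1, (hinv n).2.1, (hinv n).2.2⟩).1.1
      rw [hadd]
      push_cast
      calc ((n : ℝ≥0∞) + 1) * c = (n : ℝ≥0∞) * c + c := by ring
        _ ≤ μ (T n) + μ (U (T n)) := add_le_add ih (hcle n)
  have hctop : c ≠ ∞ := by
    rw [hc]; exact (ENNReal.div_lt_top (measure_ne_top μ u) (by norm_num)).ne
  obtain ⟨n, hn⟩ := ENNReal.exists_nat_gt
    (ENNReal.div_lt_top (ne_top_of_le_ne_top (measure_ne_top μ s) hr) hc0.ne').ne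
  have hfin : r < (n : ℝ≥0∞) * c := by
    rwa [ENNReal.div_lt_iff (Or.inl hc0.ne') (Or.inl hctop)] at hn
  exact absurd ((hgrow n).trans (hinv n).2.2) (not_le.mpr hfin)

end Helpers

/-- Formula for the Wasserstein derivative of a law-invariant `F` (with lifting `f` on
measures) at a discrete random variable: on each level set `{ξ = x i}`, the gradient equals
the limit of the finite-difference quotient of `f` obtained by shifting the atom at `x i`. -/
theorem wasserstein_derivative_discrete_formula
    {Ω : Type*} [MeasurableSpace Ω] (μ : Measure Ω) [IsProbabilityMeasure μ]
    (hatomless : ∀ s : Set Ω, MeasurableSet s → 0 < μ s →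
      ∃ t ⊆ s, MeasurableSet t ∧ 0 < μ t ∧ μ t < μ s)
    (ξ : Ω → ℝ) (hξ : MemLp ξ 2 μ) (hξm : Measurable ξ)
    (x : ℕ → ℝ) (hx : Function.Injective x)
    (p : ℕ → ℝ≥0∞) (hp : ∀ i, μ {ω | ξ ω = x i} = p i) (hppos : ∀ i, 0 < p i)
    (hdiscrete : ∀ᵐ ω ∂μ, ∃ i, ξ ω = x i)
    (F : (Ω → ℝ) → ℝ) (f : Measure ℝ → ℝ)
    (hlift : ∀ ζ : Ω → ℝ, MemLp ζ 2 μ → F ζ = f (Measure.map ζ μ))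
    (DFξ : Ω → ℝ) (hDFξ : MemLp DFξ 2 μ)
    (hdiff : ∀ η : Ω → ℝ, MemLp η 2 μ →
      Tendsto (fun ε : ℝ => (F (ξ + ε • η) - F ξ) / ε) (𝓝[≠] 0)
        (𝓝 (∫ ω, DFξ ω * η ω ∂μ))) :
    ∀ i : ℕ, ∃ L : ℝ,
      Tendsto (fun ε : ℝ =>
          (f (Measure.sum (fun j : ℕ => if j = i then (0 : Measure ℝ)
                else p j • Measure.dirac (x j)) + p i • Measure.dirac (x i + ε))
            - f (Measure.sum fun j : ℕ => p j • Measure.dirac (x j)))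
          / (ε * (p i).toReal)) (𝓝[≠] 0) (𝓝 L) ∧
      ∀ᵐ ω ∂μ, ξ ω = x i → DFξ ω = L := by
  classical
  intro i
  -- basic setup
  set Sj : ℕ → Set Ω := fun j => {ω | ξ ω = x j} with hSjdef
  have hSjm : ∀ j, MeasurableSet (Sj j) := fun j => hξm (measurableSet_singleton (x j))
  have hSjdisj : Pairwise (Function.onFun Disjoint Sj) := by
    intro j l hjl
    rw [Function.onFun, Set.disjoint_left]
    rintro ω (h1 : ξ ω = x j) (h2 : ξ ω = x l)
    exact hjl (hx (h1 ▸ h2))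
  set S : Set Ω := Sj i with hSdef
  have hS : MeasurableSet S := hSjm i
  have hμS : μ S = p i := hp i
  set c : ℝ := (p i).toReal with hcdef
  have hc : 0 < c := ENNReal.toReal_pos (hppos i).ne' (hμS ▸ measure_ne_top μ S)
  -- indicator functions
  set η : Set Ω → Ω → ℝ := fun T => T.indicator (fun _ => (1 : ℝ)) with hηdef
  have hηmem : ∀ T : Set Ω, MeasurableSet T → MemLp (η T) 2 μ := fun T hT =>
    memLp_indicator_const 2 hT 1 (Or.inr (measure_ne_top μ T))
  have hζmem : ∀ (T : Set Ω), MeasurableSet T → ∀ ε : ℝ, MemLp (ξ + ε • η T) 2 μ :=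
    fun T hT ε => hξ.add ((hηmem T hT).const_smul ε)
  have hζm : ∀ (T : Set Ω), MeasurableSet T → ∀ ε : ℝ, Measurable (ξ + ε • η T) :=
    fun T hT ε => hξm.add ((measurable_const.indicator hT).const_smul ε)
  -- integral of DFξ against indicator
  have hint : ∀ (T : Set Ω), MeasurableSet T →
      ∫ ω, DFξ ω * η T ω ∂μ = ∫ ω in T, DFξ ω ∂μ := by
    intro T hT
    rw [← integral_indicator hT]
    refine integral_congr_ae (Eventually.of_forall fun ω => ?_)
    by_cases h : ω ∈ T <;> simp [hηdef, Set.indicator_of_mem, Set.indicator_of_notMem, h]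
  -- the law of ξ
  have law0 : Measure.map ξ μ = Measure.sum (fun j : ℕ => p j • Measure.dirac (x j)) := by
    rw [wddf_map_discrete μ hξm hSjm hSjdisj (y := x) (fun j ω hω => hω) hdiscrete]
    congr 1
    funext j
    rw [hp j]
  -- the law of ξ + ε • η S
  have lawS : ∀ ε : ℝ, Measure.map (ξ + ε • η S) μ =
      Measure.sum (fun j : ℕ => p j • Measure.dirac (if j = i then x i + ε else x j)) := by
    intro ε
    rw [wddf_map_discrete μ (hζm S hS ε) hSjm hSjdisj
      (y := fun j => if j = i then x i + ε else x j) ?_ hdiscrete]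
    · congr 1; funext j; rw [hp j]
    · intro j ω hω
      have hωξ : ξ ω = x j := hω
      by_cases hji : j = i
      · subst hji
        have hmem : ω ∈ S := hω
        simp [hηdef, Pi.add_apply, Pi.smul_apply, Set.indicator_of_mem hmem, hωξ]
      · have hnot : ω ∉ S := by
          intro hmem
          exact hji (hx ((hωξ.symm.trans (hmem : ξ ω = x i))))
        simp [hηdef, Pi.add_apply, Pi.smul_apply, Set.indicator_of_notMem hnot, hωξ, hji]
  -- rewriting the sum measure in the statement's form
  have sum_split : ∀ ε : ℝ,
      Measure.sum (fun j : ℕ => p j • Measure.dirac (if j = i then x i + ε else x j)) =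
      Measure.sum (fun j : ℕ => if j = i then (0 : Measure ℝ)
        else p j • Measure.dirac (x j)) + p i • Measure.dirac (x i + ε) := by
    intro ε
    ext E hE
    rw [Measure.add_apply, Measure.sum_apply _ hE, Measure.sum_apply _ hE,
      ENNReal.tsum_eq_add_tsum_ite i]
    simp only [if_pos rfl]
    rw [add_comm]
    congr 1
    refine tsum_congr fun j => ?_
    by_cases hji : j = i
    · simp [hji]
    · simp [hji]
  -- Part 1 : the limit along the difference quotient
  set g := DFξ with hgdef
  set L : ℝ := (∫ ω in S, g ω ∂μ) / c with hLdef
  refine ⟨L, ?_, ?_⟩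
  · have h1 := (hdiff (η S) (hηmem S hS)).div_const c
    rw [hint S hS] at h1
    have heq : (fun ε : ℝ =>
        (f (Measure.sum (fun j : ℕ => if j = i then (0 : Measure ℝ)
              else p j • Measure.dirac (x j)) + p i • Measure.dirac (x i + ε))
          - f (Measure.sum fun j : ℕ => p j • Measure.dirac (x j)))
        / (ε * c)) = fun ε : ℝ => ((F (ξ + ε • η S) - F ξ) / ε) / c := by
      funext ε
      rw [hlift _ (hζmem S hS ε), hlift ξ hξ, law0, lawS ε, sum_split ε, div_div]
    rw [heq]
    exact h1
  · -- Part 2 : a.e. constancy on the level set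
    -- measurable representative of DFξ
    set g' : Ω → ℝ := hDFξ.1.mk DFξ with hg'def
    have hg'ae : DFξ =ᵐ[μ] g' := hDFξ.1.ae_eq_mk
    have hg'm : Measurable g' := hDFξ.1.stronglyMeasurable_mk.measurable
    have hgint : Integrable DFξ μ := hDFξ.integrable one_le_two
    have hg'int : Integrable g' μ := hgint.congr hg'ae
    have setint_eq : ∀ T : Set Ω, ∫ ω in T, g' ω ∂μ = ∫ ω in T, DFξ ω ∂μ :=
      fun T => integral_congr_ae (ae_restrict_of_ae hg'ae.symm)
    -- the law of ξ + ε • η T for T ⊆ S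
    have lawT : ∀ (T : Set Ω), MeasurableSet T → T ⊆ S → ∀ ε : ℝ,
        Measure.map (ξ + ε • η T) μ = Measure.sum (fun k : Option ℕ =>
          μ (k.elim T (fun j => if j = i then S \ T else Sj j)) •
            Measure.dirac (k.elim (x i + ε) x)) := by
      intro T hTm hTS ε
      refine wddf_map_discrete μ (hζm T hTm ε)
        (A := fun k : Option ℕ => k.elim T (fun j => if j = i then S \ T else Sj j))
        (y := fun k : Option ℕ => k.elim (x i + ε) x) ?_ ?_ ?_ ?_
      · rintro (_ | j)
        · exact hTm
        · by_cases hji : j = i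
          · simpa [hji] using hS.diff hTm
          · simpa [hji] using hSjm j
      · -- pairwise disjointness
        have hsub : ∀ j : ℕ, (if j = i then S \ T else Sj j) ⊆ Sj j := by
          intro j
          by_cases hji : j = i
          · rw [if_pos hji, hji]; exact Set.diff_subset
          · rw [if_neg hji]
        have hTdisj : ∀ j : ℕ, j = i → Disjoint T (if j = i then S \ T else Sj j) := by
          intro j hji; subst hji; simp [Set.disjoint_sdiff_right]
        have hTdisj' : ∀ j : ℕ, j ≠ i → Disjoint T (if j = i then S \ T else Sj j) := by
          intro j hji
          refine Set.disjoint_of_subset hTS (hsub j) ?_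
          exact hSjdisj (Ne.symm hji)
        have hTd : ∀ j : ℕ, Disjoint T (if j = i then S \ T else Sj j) := by
          intro j; by_cases hji : j = i
          · exact hTdisj j hji
          · exact hTdisj' j hji
        rintro (_ | j) (_ | l) hkl
        · exact absurd rfl hkl
        · exact hTd l
        · exact (hTd j).symm
        · have hjl : j ≠ l := by rintro rfl; exact hkl rfl
          exact Set.disjoint_of_subset (hsub j) (hsub l) (hSjdisj hjl)
      · -- the function is constant on each piece
        rintro (_ | j) ω hω
        · have hωT : ω ∈ T := hω
          have hωS : ξ ω = x i := hTS hωT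
          simp [hηdef, Pi.add_apply, Pi.smul_apply, Set.indicator_of_mem hωT, hωS]
        · have hω' : ω ∈ (if j = i then S \ T else Sj j) := hω
          by_cases hji : j = i
          · rw [if_pos hji] at hω'
            have hωξ : ξ ω = x i := hω'.1
            have hωξ' : ξ ω = x j := by rw [hji]; exact hωξ
            simp [hηdef, Pi.add_apply, Pi.smul_apply, Set.indicator_of_notMem hω'.2, hωξ']
          · rw [if_neg hji] at hω'
            have hωξ : ξ ω = x j := hω'
            have hnot : ω ∉ T := by
              intro hmem
              exact hji (hx ((hωξ.symm.trans (hTS hmem : ξ ω = x i))))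
            simp [hηdef, Pi.add_apply, Pi.smul_apply, Set.indicator_of_notMem hnot, hωξ]
      · -- coverage
        filter_upwards [hdiscrete] with ω hω
        obtain ⟨j, hj⟩ := hω
        by_cases hji : j = i
        · by_cases hωT : ω ∈ T
          · exact ⟨none, hωT⟩
          · refine ⟨some i, ?_⟩
            have hmem : ω ∈ S \ T := ⟨by rw [hji] at hj; exact hj, hωT⟩
            show ω ∈ (if i = i then S \ T else Sj i)
            rw [if_pos rfl]
            exact hmem
        · refine ⟨some j, ?_⟩
          show ω ∈ (if j = i then S \ T else Sj j)
          rw [if_neg hji]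
          exact hj
    -- the key claim : integrals over equal-measure subsets of S agree
    have claimC : ∀ A B : Set Ω, MeasurableSet A → MeasurableSet B → A ⊆ S → B ⊆ S →
        μ A = μ B → ∫ ω in A, g' ω ∂μ = ∫ ω in B, g' ω ∂μ := by
      intro A B hAm hBm hAS hBS hAB
      have weights : ∀ k : Option ℕ,
          μ (k.elim A (fun j => if j = i then S \ A else Sj j)) =
          μ (k.elim B (fun j => if j = i then S \ B else Sj j)) := by
        rintro (_ | j)
        · exact hAB
        · show μ (if j = i then S \ A else Sj j) = μ (if j = i then S \ B else Sj j)
          by_cases hji : j = i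
          · rw [if_pos hji, if_pos hji,
              measure_diff hAS hAm.nullMeasurableSet (measure_ne_top μ A),
              measure_diff hBS hBm.nullMeasurableSet (measure_ne_top μ B), hAB]
          · simp only [if_neg hji]
      have hFeq : ∀ ε : ℝ, F (ξ + ε • η A) = F (ξ + ε • η B) := by
        intro ε
        rw [hlift _ (hζmem A hAm ε), hlift _ (hζmem B hBm ε), lawT A hAm hAS ε,
          lawT B hBm hBS ε]
        exact congrArg f (congrArg Measure.sum (funext fun k => by rw [weights k]))
      have h1 := hdiff (η A) (hηmem A hAm)
      have h2 := hdiff (η B) (hηmem B hBm)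
      rw [hint A hAm] at h1
      rw [hint B hBm] at h2
      have hfun : (fun ε : ℝ => (F (ξ + ε • η A) - F ξ) / ε) =
          fun ε : ℝ => (F (ξ + ε • η B) - F ξ) / ε := by
        funext ε; rw [hFeq ε]
      rw [hfun] at h1
      have := tendsto_nhds_unique h1 h2
      rw [← setint_eq A, ← setint_eq B] at this
      exact this
    -- integral identities
    have hSg' : ∫ ω in S, g' ω ∂μ = L * c := by
      rw [setint_eq S, hLdef, div_mul_cancel₀ _ hc.ne']
    have hconstint : ∫ _ω in S, L ∂μ = c * L := by
      rw [setIntegral_const, measureReal_def, hμS, hcdef, smul_eq_mul]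
    have hg'S : Integrable g' (μ.restrict S) := hg'int.restrict
    have intzero : ∫ ω in S, (g' ω - L) ∂μ = 0 := by
      rw [integral_sub hg'S (integrable_const L), hSg', hconstint]
      ring
    -- one-sided vanishing forces constancy
    have zeroNeg : μ.restrict S {ω | g' ω < L} = 0 → ∀ᵐ ω ∂μ.restrict S, g' ω = L := by
      intro h
      have hnn : ∀ᵐ ω ∂μ.restrict S, (0 : ℝ) ≤ g' ω - L := by
        rw [ae_iff]
        have hset : {ω | ¬ (0 : ℝ) ≤ g' ω - L} = {ω | g' ω < L} := by
          ext ω; simp [not_le, sub_neg]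
        rw [hset]; exact h
      have hint2 : Integrable (fun ω => g' ω - L) (μ.restrict S) :=
        hg'S.sub (integrable_const L)
      have hz := (integral_eq_zero_iff_of_nonneg_ae hnn hint2).mp intzero
      filter_upwards [hz] with ω hω
      have : g' ω - L = 0 := hω
      linarith
    have zeroPos : μ.restrict S {ω | L < g' ω} = 0 → ∀ᵐ ω ∂μ.restrict S, g' ω = L := by
      intro h
      have hnn : ∀ᵐ ω ∂μ.restrict S, (0 : ℝ) ≤ L - g' ω := by
        rw [ae_iff]
        have hset : {ω | ¬ (0 : ℝ) ≤ L - g' ω} = {ω | L < g' ω} := by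
          ext ω; simp [not_le, sub_neg]
        rw [hset]; exact h
      have hint2 : Integrable (fun ω => L - g' ω) (μ.restrict S) :=
        (integrable_const L).sub hg'S
      have intzero' : ∫ ω in S, (L - g' ω) ∂μ = 0 := by
        rw [integral_sub (integrable_const L) hg'S, hSg', hconstint]
        ring
      have hz := (integral_eq_zero_iff_of_nonneg_ae hnn hint2).mp intzero'
      filter_upwards [hz] with ω hω
      have : L - g' ω = 0 := hω
      linarith
    -- both tails positive is impossible
    have keyPos : μ.restrict S {ω | L < g' ω} ≠ 0 → μ.restrict S {ω | g' ω < L} ≠ 0 →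
        False := by
      intro h1 h2
      -- find quantitative tails
      have tail1 : ∃ n : ℕ, μ.restrict S {ω | L + 1 / (n + 1) ≤ g' ω} ≠ 0 := by
        by_contra hcon
        push_neg at hcon
        refine h1 ?_
        have hsub : {ω | L < g' ω} ⊆ ⋃ n : ℕ, {ω | L + 1 / (n + 1 : ℝ) ≤ g' ω} := by
          intro ω hω
          obtain ⟨n, hn⟩ := exists_nat_one_div_lt (K := ℝ) (sub_pos.2 hω)
          refine Set.mem_iUnion.mpr ⟨n, ?_⟩
          have : (1 : ℝ) / (n + 1) < g' ω - L := hn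
          simp only [Set.mem_setOf_eq]
          linarith
        exact measure_mono_null hsub (measure_iUnion_null fun n => hcon n)
      have tail2 : ∃ m : ℕ, μ.restrict S {ω | g' ω ≤ L - 1 / (m + 1)} ≠ 0 := by
        by_contra hcon
        push_neg at hcon
        refine h2 ?_
        have hsub : {ω | g' ω < L} ⊆ ⋃ m : ℕ, {ω | g' ω ≤ L - 1 / (m + 1 : ℝ)} := by
          intro ω hω
          obtain ⟨m, hm⟩ := exists_nat_one_div_lt (K := ℝ) (sub_pos.2 hω)
          refine Set.mem_iUnion.mpr ⟨m, ?_⟩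
          have : (1 : ℝ) / (m + 1) < L - g' ω := hm
          simp only [Set.mem_setOf_eq]
          linarith
        exact measure_mono_null hsub (measure_iUnion_null fun m => hcon m)
      obtain ⟨n, hn⟩ := tail1
      obtain ⟨m, hm⟩ := tail2
      set a : ℝ := 1 / (n + 1) with hadef
      set b : ℝ := 1 / (m + 1) with hbdef
      have ha : 0 < a := by positivity
      have hb : 0 < b := by positivity
      have htam : MeasurableSet {ω | L + a ≤ g' ω} :=
        measurableSet_le measurable_const hg'm
      have htbm : MeasurableSet {ω | g' ω ≤ L - b} :=
        measurableSet_le hg'm measurable_const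
      set A : Set Ω := {ω | L + a ≤ g' ω} ∩ S with hAdef
      set B : Set Ω := {ω | g' ω ≤ L - b} ∩ S with hBdef
      have hAm : MeasurableSet A := htam.inter hS
      have hBm : MeasurableSet B := htbm.inter hS
      have hμA : 0 < μ A := by
        rw [pos_iff_ne_zero]
        intro hcon
        refine hn ?_
        rw [Measure.restrict_apply htam]
        exact hcon
      have hμB : 0 < μ B := by
        rw [pos_iff_ne_zero]
        intro hcon
        refine hm ?_
        rw [Measure.restrict_apply htbm]
        exact hcon
      set r : ℝ≥0∞ := min (μ A) (μ B) with hrdef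
      have hr0 : 0 < r := lt_min hμA hμB
      have hrtop : r ≠ ∞ := ne_top_of_le_ne_top (measure_ne_top μ A) (min_le_left _ _)
      have hrt : 0 < r.toReal := ENNReal.toReal_pos hr0.ne' hrtop
      obtain ⟨A', hA'A, hA'm, hA'r⟩ := wddf_sier μ hatomless hAm (min_le_left (μ A) (μ B))
      obtain ⟨B', hB'B, hB'm, hB'r⟩ := wddf_sier μ hatomless hBm (min_le_right (μ A) (μ B))
      have hintAB : ∫ ω in A', g' ω ∂μ = ∫ ω in B', g' ω ∂μ := by
        refine claimC A' B' hA'm hB'm (hA'A.trans Set.inter_subset_right)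
          (hB'B.trans Set.inter_subset_right) ?_
        rw [hA'r, hB'r]
      have hlow : (L + a) * r.toReal ≤ ∫ ω in A', g' ω ∂μ := by
        have := setIntegral_ge_of_const_le hA'm (measure_ne_top μ A')
          (fun ω hω => (hA'A hω).1) hg'int.integrableOn
        rwa [measureReal_def, hA'r, smul_eq_mul, mul_comm] at this
      have hhigh : ∫ ω in B', g' ω ∂μ ≤ (L - b) * r.toReal := by
        have hneg := setIntegral_ge_of_const_le hB'm (measure_ne_top μ B')
          (f := fun ω => - g' ω) (c := -(L - b))
          (fun ω hω => neg_le_neg (hB'B hω).1)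
          hg'int.neg.integrableOn
        rw [integral_neg, measureReal_def, hB'r, smul_eq_mul] at hneg
        linarith
      have : (L + a) * r.toReal ≤ (L - b) * r.toReal := by
        calc (L + a) * r.toReal ≤ ∫ ω in A', g' ω ∂μ := hlow
          _ = ∫ ω in B', g' ω ∂μ := hintAB
          _ ≤ (L - b) * r.toReal := hhigh
      have hcmp : L + a ≤ L - b := le_of_mul_le_mul_right this hrt
      linarith
    -- conclude
    have hfinal : ∀ᵐ ω ∂μ.restrict S, g' ω = L := by
      by_cases h1 : μ.restrict S {ω | L < g' ω} = 0
      · exact zeroPos h1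
      · by_cases h2 : μ.restrict S {ω | g' ω < L} = 0
        · exact zeroNeg h2
        · exact (keyPos h1 h2).elim
    have hres := (ae_restrict_iff' hS).mp hfinal
    filter_upwards [hres, hg'ae] with ω hω hae hξω
    exact hae.trans (hω hξω)
end

section
/- Let F : L²(Ω, ℝ) → ℝ be law-invariant and Fréchet differentiable at ξ. Then the gradient DF(ξ) is measurable with respect to the sigma-algebra generated by ξ, up to null sets, provided the probability space is atomless. Equivalently, E[DF(ξ) | σ(ξ)] = DF(ξ) a.s. -/
open MeasureTheory Filter Topology
open scoped ENNReal

section AuxiliaryLemmas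

open Set

variable {Ω : Type*} [MeasurableSpace Ω] {μ : Measure Ω}

lemma aux_small [IsFiniteMeasure μ]
    (hatomless : ∀ s : Set Ω, MeasurableSet s → 0 < μ s →
      ∃ t ⊆ s, MeasurableSet t ∧ 0 < μ t ∧ μ t < μ s)
    {s : Set Ω} (hs : MeasurableSet s) (hpos : 0 < μ s) {δ : ℝ≥0∞} (hδ : 0 < δ) :
    ∃ t ⊆ s, MeasurableSet t ∧ 0 < μ t ∧ μ t ≤ δ := by
  have key : ∀ n : ℕ, ∃ t ⊆ s, MeasurableSet t ∧ 0 < μ t ∧ μ t ≤ μ s * 2⁻¹ ^ n := by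
    intro n
    induction n with
    | zero => exact ⟨s, subset_rfl, hs, hpos, by simp⟩
    | succ n ih =>
      obtain ⟨t, hts, ht, htpos, htle⟩ := ih
      obtain ⟨u, hut, hu, hupos, hult⟩ := hatomless t ht htpos
      have htfin : μ t ≠ ∞ := measure_ne_top μ t
      rcases le_or_gt (μ u) (μ t / 2) with h | h
      · refine ⟨u, hut.trans hts, hu, hupos, ?_⟩
        calc μ u ≤ μ t / 2 := h
          _ = μ t * 2⁻¹ := by rw [div_eq_mul_inv]
          _ ≤ μ s * 2⁻¹ ^ n * 2⁻¹ := mul_le_mul_left htle _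
          _ = μ s * 2⁻¹ ^ (n + 1) := by rw [pow_succ, mul_assoc]
      · refine ⟨t \ u, (Set.diff_subset).trans hts, ht.diff hu, ?_, ?_⟩
        · have : μ (t \ u) = μ t - μ u := measure_diff hut hu.nullMeasurableSet (measure_ne_top μ u)
          rw [this]
          exact tsub_pos_of_lt hult
        · have hd : μ (t \ u) = μ t - μ u := measure_diff hut hu.nullMeasurableSet (measure_ne_top μ u)
          calc μ (t \ u) = μ t - μ u := hd
            _ ≤ μ t - μ t / 2 := tsub_le_tsub_left h.le _
            _ = μ t / 2 := ENNReal.sub_half htfin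
            _ = μ t * 2⁻¹ := by rw [div_eq_mul_inv]
            _ ≤ μ s * 2⁻¹ ^ n * 2⁻¹ := mul_le_mul_left htle _
            _ = μ s * 2⁻¹ ^ (n + 1) := by rw [pow_succ, mul_assoc]
  have hμs : μ s ≠ ∞ := measure_ne_top μ s
  obtain ⟨n, hn⟩ := ENNReal.exists_inv_two_pow_lt (a := δ / μ s) (by
    simp only [ne_eq, ENNReal.div_eq_zero_iff, not_or]
    exact ⟨hδ.ne', hμs⟩)
  obtain ⟨t, hts, ht, htpos, htle⟩ := key n
  refine ⟨t, hts, ht, htpos, ?_⟩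
  calc μ t ≤ μ s * 2⁻¹ ^ n := htle
    _ ≤ μ s * (δ / μ s) := mul_le_mul_right hn.le _
    _ ≤ δ := ENNReal.mul_div_le

lemma aux_sier [IsFiniteMeasure μ]
    (hatomless : ∀ s : Set Ω, MeasurableSet s → 0 < μ s →
      ∃ t ⊆ s, MeasurableSet t ∧ 0 < μ t ∧ μ t < μ s)
    {s : Set Ω} (hs : MeasurableSet s) {r : ℝ≥0∞} (hr : r ≤ μ s) :
    ∃ t, t ⊆ s ∧ MeasurableSet t ∧ μ t = r := by
  classical
  have hrfin : r ≠ ∞ := (hr.trans_lt (measure_lt_top μ s)).ne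
  -- greedy step
  have hstep : ∀ t : Set Ω, MeasurableSet t → t ⊆ s → μ t ≤ r →
      ∃ u : Set Ω, MeasurableSet u ∧ u ⊆ s \ t ∧ μ t + μ u ≤ r ∧
        ∀ v, MeasurableSet v → v ⊆ s \ t → μ t + μ v ≤ r → μ v ≤ 2 * μ u := by
    intro t ht hts htr
    set A := {m : ℝ≥0∞ | ∃ v, MeasurableSet v ∧ v ⊆ s \ t ∧ μ t + μ v ≤ r ∧ μ v = m} with hA
    have h0A : (0 : ℝ≥0∞) ∈ A := ⟨∅, .empty, Set.empty_subset _, by simpa using htr, measure_empty⟩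
    have hAle : ∀ m ∈ A, m ≤ r := by
      rintro m ⟨v, hv, hvs, hvr, rfl⟩
      exact le_trans (le_add_self) hvr
    rcases eq_or_ne (sSup A) 0 with ha | ha
    · refine ⟨∅, .empty, Set.empty_subset _, by simpa using htr, ?_⟩
      intro v hv hvs hvr
      have : μ v ≤ sSup A := le_sSup ⟨v, hv, hvs, hvr, rfl⟩
      rw [ha] at this
      simpa using this
    · have hafin : sSup A ≠ ∞ := ((sSup_le hAle).trans_lt hrfin.lt_top).ne
      have haa : sSup A / 2 < sSup A := ENNReal.half_lt_self ha hafin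
      obtain ⟨m, hmA, hm⟩ := lt_sSup_iff.mp haa
      obtain ⟨u, hu, hus, hur, hum⟩ := hmA
      refine ⟨u, hu, hus, hur, fun v hv hvs hvr => ?_⟩
      calc μ v ≤ sSup A := le_sSup ⟨v, hv, hvs, hvr, rfl⟩
        _ = sSup A / 2 + sSup A / 2 := (ENNReal.add_halves _).symm
        _ ≤ μ u + μ u := by
            have h' : sSup A / 2 ≤ μ u := by rw [hum]; exact hm.le
            exact add_le_add h' h'
        _ = 2 * μ u := (two_mul _).symm
  choose! U hU1 hU2 hU3 hU4 using hstep
  -- the iterated sequence as a subtype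
  let S := {t : Set Ω // MeasurableSet t ∧ t ⊆ s ∧ μ t ≤ r}
  have hdisj : ∀ t : S, Disjoint t.1 (U t.1) := by
    intro t
    exact disjoint_compl_right.mono_right
      (((hU2 t.1 t.2.1 t.2.2.1 t.2.2.2).trans (Set.diff_subset_compl s t.1)))
  have hmu : ∀ t : S, μ (t.1 ∪ U t.1) = μ t.1 + μ (U t.1) := by
    intro t
    exact measure_union (hdisj t) (hU1 t.1 t.2.1 t.2.2.1 t.2.2.2)
  let next : S → S := fun t =>
    ⟨t.1 ∪ U t.1, (t.2.1.union (hU1 t.1 t.2.1 t.2.2.1 t.2.2.2)),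
      Set.union_subset t.2.2.1 ((hU2 t.1 t.2.1 t.2.2.1 t.2.2.2).trans Set.diff_subset),
      by rw [hmu t]; exact hU3 t.1 t.2.1 t.2.2.1 t.2.2.2⟩
  let T : ℕ → S := fun n => next^[n] ⟨∅, MeasurableSet.empty, Set.empty_subset s, by simp⟩
  have hTsucc : ∀ n, T (n + 1) = next (T n) := by
    intro n
    simp only [T, Function.iterate_succ_apply']
  have hTmono : Monotone fun n => (T n).1 := by
    refine monotone_nat_of_le_succ fun n => ?_
    rw [hTsucc n]
    exact Set.subset_union_left
  set Tset := ⋃ n, (T n).1 with hTset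
  have hTsetm : MeasurableSet Tset := MeasurableSet.iUnion fun n => (T n).2.1
  have hTsets : Tset ⊆ s := Set.iUnion_subset fun n => (T n).2.2.1
  have hTmeas : μ Tset = ⨆ n, μ (T n).1 :=
    Directed.measure_iUnion (Monotone.directed_le hTmono)
  have hTler : μ Tset ≤ r := by
    rw [hTmeas]
    exact iSup_le fun n => (T n).2.2.2
  refine ⟨Tset, hTsets, hTsetm, ?_⟩
  by_contra hne
  have hlt : μ Tset < r := lt_of_le_of_ne hTler hne
  set δ := r - μ Tset with hδdef
  have hδpos : 0 < δ := tsub_pos_of_lt hlt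
  have hsT : 0 < μ (s \ Tset) := by
    have : μ (s \ Tset) = μ s - μ Tset := measure_diff hTsets hTsetm.nullMeasurableSet (measure_ne_top μ _)
    rw [this]
    exact tsub_pos_of_lt (lt_of_lt_of_le hlt hr)
  obtain ⟨v, hvs, hv, hvpos, hvle⟩ := aux_small hatomless (hs.diff hTsetm) hsT hδpos
  -- v is admissible at every stage
  have hadm : ∀ n, μ v ≤ 2 * μ (U (T n).1) := by
    intro n
    refine hU4 (T n).1 (T n).2.1 (T n).2.2.1 (T n).2.2.2 v hv
      (hvs.trans (Set.diff_subset_diff_right (Set.subset_iUnion (fun k => (T k).1) n))) ?_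
    calc μ (T n).1 + μ v ≤ μ Tset + δ :=
          add_le_add (le_iSup_of_le n le_rfl |>.trans_eq hTmeas.symm) hvle
      _ = r := add_tsub_cancel_of_le hlt.le
  have hgrow : ∀ n, n * (μ v / 2) ≤ μ (T n).1 := by
    intro n
    induction n with
    | zero => simp
    | succ n ih =>
      have h1 : μ v / 2 ≤ μ (U (T n).1) := by
        rw [ENNReal.div_le_iff_le_mul (Or.inl two_ne_zero) (Or.inl ENNReal.ofNat_ne_top)]
        rw [mul_comm]
        exact hadm n
      have h2 : μ (T (n + 1)).1 = μ (T n).1 + μ (U (T n).1) := by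
        rw [hTsucc n]
        exact hmu (T n)
      calc (↑(n + 1) : ℝ≥0∞) * (μ v / 2) = n * (μ v / 2) + μ v / 2 := by
            push_cast
            ring
        _ ≤ μ (T n).1 + μ (U (T n).1) := add_le_add ih h1
        _ = μ (T (n + 1)).1 := h2.symm
  -- contradiction with boundedness
  have hhalfpos : (0 : ℝ≥0∞) < μ v / 2 := ENNReal.div_pos hvpos.ne' (by norm_num)
  obtain ⟨n, hn⟩ := ENNReal.exists_nat_gt
    (show r / (μ v / 2) ≠ ∞ from (ENNReal.div_lt_top hrfin hhalfpos.ne').ne)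
  have : r < n * (μ v / 2) := by
    rw [← ENNReal.div_lt_iff (Or.inl hhalfpos.ne')
      (Or.inl (by
        refine (lt_of_le_of_lt (ENNReal.half_le_self) (measure_lt_top μ v)).ne))]
    exact hn
  exact absurd ((hgrow n).trans (T n).2.2.2) (not_le.mpr this)

lemma aux_ae_const [IsFiniteMeasure μ]
    (hatomless : ∀ s : Set Ω, MeasurableSet s → 0 < μ s →
      ∃ t ⊆ s, MeasurableSet t ∧ 0 < μ t ∧ μ t < μ s)
    {A : Set Ω} (hA : MeasurableSet A) {Z : Ω → ℝ}
    (hZm : StronglyMeasurable Z) (hZi : Integrable Z μ)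
    (H : ∀ B C : Set Ω, MeasurableSet B → MeasurableSet C → B ⊆ A → C ⊆ A → Disjoint B C →
      μ B = μ C → ∫ ω in B, Z ω ∂μ = ∫ ω in C, Z ω ∂μ) :
    ∃ c : ℝ, ∀ᵐ ω ∂μ, ω ∈ A → Z ω = c := by
  classical
  by_cases hA0 : μ A = 0
  · refine ⟨0, ?_⟩
    have hae : ∀ᵐ ω ∂μ, ω ∉ A := by
      rw [ae_iff]
      simpa using hA0
    filter_upwards [hae] with ω hω h
    exact absurd h hω
  -- key dichotomy
  have key : ∀ q : ℚ, μ (A ∩ {ω | Z ω < (q : ℝ)}) = 0 ∨ μ (A ∩ {ω | (q : ℝ) < Z ω}) = 0 := by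
    intro q
    by_contra hcon
    push_neg at hcon
    obtain ⟨h1, h2⟩ := hcon
    set Q := A ∩ {ω | Z ω < (q : ℝ)} with hQdef
    set P := A ∩ {ω | (q : ℝ) < Z ω} with hPdef
    have hQm : MeasurableSet Q := hA.inter (hZm.measurable measurableSet_Iio)
    have hPm : MeasurableSet P := hA.inter (hZm.measurable measurableSet_Ioi)
    set m0 := min (μ P) (μ Q) with hm0
    have hm0pos : 0 < m0 := lt_min (pos_iff_ne_zero.mpr h2) (pos_iff_ne_zero.mpr h1)
    obtain ⟨B, hBP, hBm, hBμ⟩ := aux_sier hatomless hPm (min_le_left _ _)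
    obtain ⟨C, hCQ, hCm, hCμ⟩ := aux_sier hatomless hQm (min_le_right _ _)
    have hdisj : Disjoint B C := by
      refine Set.disjoint_left.mpr fun ω hωB hωC => ?_
      exact lt_irrefl (Z ω) (lt_trans (hCQ hωC).2 (hBP hωB).2)
    have hBpos : 0 < μ B := hBμ ▸ hm0pos
    have hint := H B C hBm hCm (hBP.trans Set.inter_subset_left)
      (hCQ.trans Set.inter_subset_left) hdisj (hBμ.trans hCμ.symm)
    -- ∫_C Z ≤ q * μ C
    have hCbound : ∫ ω in C, Z ω ∂μ ≤ (μ C).toReal * (q : ℝ) := by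
      have h := setIntegral_mono_on hZi.integrableOn
        (integrableOn_const (measure_ne_top μ C)) hCm
        (fun ω hω => (hCQ hω).2.le)
      rwa [setIntegral_const, smul_eq_mul] at h
    -- ∫_B (Z - q) > 0
    have hpos : 0 < ∫ ω in B, (Z ω - (q : ℝ)) ∂μ := by
      rw [setIntegral_pos_iff_support_of_nonneg_ae]
      · refine lt_of_lt_of_le hBpos (measure_mono ?_)
        intro ω hω
        refine ⟨?_, hω⟩
        have : (q : ℝ) < Z ω := (hBP hω).2
        simp only [Function.mem_support]
        exact sub_ne_zero_of_ne (ne_of_gt this)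
      · filter_upwards [ae_restrict_mem hBm] with ω hω
        exact sub_nonneg.mpr (le_of_lt (hBP hω).2)
      · exact (hZi.integrableOn).sub (integrableOn_const (measure_ne_top μ B))
    have hsplit : ∫ ω in B, (Z ω - (q : ℝ)) ∂μ
        = ∫ ω in B, Z ω ∂μ - (μ B).toReal * (q : ℝ) := by
      rw [integral_sub hZi.integrableOn (integrableOn_const (measure_ne_top μ B)),
        setIntegral_const, smul_eq_mul, measureReal_def]
    have htoReal : (μ B).toReal = (μ C).toReal := by rw [hBμ, hCμ]
    rw [hsplit, hint, htoReal] at hpos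
    linarith
  -- the set of rational essential upper bounds
  set T := {q : ℚ | μ (A ∩ {ω | (q : ℝ) < Z ω}) = 0} with hT
  have hTup : ∀ q ∈ T, ∀ q' : ℚ, q ≤ q' → q' ∈ T := by
    intro q hq q' hqq'
    refine measure_mono_null ?_ hq
    refine Set.inter_subset_inter_right _ fun ω hω => ?_
    simp only [Set.mem_setOf_eq] at hω ⊢
    exact lt_of_le_of_lt (by exact_mod_cast hqq') hω
  have hTne : T.Nonempty := by
    by_contra hTe
    rw [Set.not_nonempty_iff_eq_empty] at hTe
    have hall : ∀ q : ℚ, μ (A ∩ {ω | Z ω < (q : ℝ)}) = 0 := by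
      intro q
      refine (key q).resolve_right ?_
      intro h
      have hqT : q ∈ T := h
      rw [hTe] at hqT
      exact hqT
    have hcover : A ⊆ ⋃ q : ℚ, A ∩ {ω | Z ω < (q : ℝ)} := by
      intro ω hω
      obtain ⟨q, hq⟩ := exists_rat_gt (Z ω)
      exact Set.mem_iUnion.mpr ⟨q, hω, hq⟩
    exact hA0 (measure_mono_null hcover (measure_iUnion_null hall))
  have hTlb : ∃ q₀ : ℚ, q₀ ∉ T := by
    by_contra hTall
    push_neg at hTall
    have hcover : A ⊆ ⋃ q : ℚ, A ∩ {ω | (q : ℝ) < Z ω} := by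
      intro ω hω
      obtain ⟨q, hq⟩ := exists_rat_lt (Z ω)
      exact Set.mem_iUnion.mpr ⟨q, hω, hq⟩
    exact hA0 (measure_mono_null hcover (measure_iUnion_null fun q => hTall q))
  obtain ⟨q₀, hq₀⟩ := hTlb
  have hq₀lb : ∀ q ∈ T, q₀ ≤ q := by
    intro q hq
    by_contra hlt
    push_neg at hlt
    exact hq₀ (hTup q hq q₀ hlt.le)
  have hbdd : BddBelow ((fun q : ℚ => (q : ℝ)) '' T) := by
    refine ⟨(q₀ : ℝ), ?_⟩
    rintro x ⟨q, hq, rfl⟩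
    show (q₀ : ℝ) ≤ (q : ℝ)
    exact_mod_cast hq₀lb q hq
  have hTimne : ((fun q : ℚ => (q : ℝ)) '' T).Nonempty := hTne.image _
  set c := sInf ((fun q : ℚ => (q : ℝ)) '' T) with hc
  have hub : ∀ q ∈ T, ∀ᵐ ω ∂μ, ω ∈ A → Z ω ≤ (q : ℝ) := by
    intro q hq
    rw [ae_iff]
    have hset : {ω | ¬(ω ∈ A → Z ω ≤ (q : ℝ))} = A ∩ {ω | (q : ℝ) < Z ω} := by
      ext ω
      simp only [Set.mem_setOf_eq, Classical.not_imp, not_le, Set.mem_inter_iff]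
    rw [hset]
    exact hq
  have hlow : ∀ q ∈ (Tᶜ : Set ℚ), ∀ᵐ ω ∂μ, ω ∈ A → (q : ℝ) ≤ Z ω := by
    intro q hq
    have h0 : μ (A ∩ {ω | Z ω < (q : ℝ)}) = 0 := (key q).resolve_right hq
    rw [ae_iff]
    have hset : {ω | ¬(ω ∈ A → (q : ℝ) ≤ Z ω)} = A ∩ {ω | Z ω < (q : ℝ)} := by
      ext ω
      simp only [Set.mem_setOf_eq, Classical.not_imp, not_le, Set.mem_inter_iff]
    rw [hset]
    exact h0
  have hclaim1 : ∀ᵐ ω ∂μ, ω ∈ A → Z ω ≤ c := by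
    filter_upwards [(ae_ball_iff (Set.to_countable T)).mpr hub] with ω hω hωA
    refine le_csInf hTimne ?_
    rintro b ⟨q, hq, rfl⟩
    exact hω q hq hωA
  have hclaim2 : ∀ᵐ ω ∂μ, ω ∈ A → c ≤ Z ω := by
    filter_upwards [(ae_ball_iff (Set.to_countable (Tᶜ : Set ℚ))).mpr hlow] with ω hω hωA
    by_contra hlt
    push_neg at hlt
    obtain ⟨q, hq1, hq2⟩ := exists_rat_btwn hlt
    have hqT : q ∉ T := by
      intro hqT
      exact absurd (csInf_le hbdd ⟨q, hqT, rfl⟩) (not_le.mpr hq2)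
    exact absurd (hω q hqT hωA) (not_le.mpr hq1)
  refine ⟨c, ?_⟩
  filter_upwards [hclaim1, hclaim2] with ω h1 h2 hωA
  exact le_antisymm (h1 hωA) (h2 hωA)

lemma aux_setint_eq {μ : Measure Ω} [IsProbabilityMeasure μ]
    (F : Lp ℝ 2 μ → ℝ)
    (hlaw : ∀ ζ ζ' : Lp ℝ 2 μ, Measure.map (ζ : Ω → ℝ) μ = Measure.map (ζ' : Ω → ℝ) μ →
      F ζ = F ζ')
    (DF : Lp ℝ 2 μ → Lp ℝ 2 μ)
    (hdiff : ∀ ζ η : Lp ℝ 2 μ,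
      Tendsto (fun ε : ℝ => (F (ζ + ε • η) - F ζ) / ε) (𝓝[≠] 0)
        (𝓝 (∫ ω, DF ζ ω * η ω ∂μ)))
    (ζ : Lp ℝ 2 μ) {a : ℝ} {B C : Set Ω} (hB : MeasurableSet B) (hC : MeasurableSet C)
    (hd : Disjoint B C) (hBC : μ B = μ C)
    (haB : ∀ᵐ ω ∂μ, ω ∈ B → ζ ω = a) (haC : ∀ᵐ ω ∂μ, ω ∈ C → ζ ω = a) :
    ∫ ω in B, DF ζ ω ∂μ = ∫ ω in C, DF ζ ω ∂μ := by
  classical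
  set η : Lp ℝ 2 μ := indicatorConstLp 2 hB (measure_ne_top μ B) (1 : ℝ)
    - indicatorConstLp 2 hC (measure_ne_top μ C) (1 : ℝ) with hηdef
  have hη : ⇑η =ᵐ[μ] fun ω =>
      B.indicator (fun _ => (1 : ℝ)) ω - C.indicator (fun _ => (1 : ℝ)) ω := by
    filter_upwards [Lp.coeFn_sub (indicatorConstLp 2 hB (measure_ne_top μ B) (1 : ℝ))
        (indicatorConstLp 2 hC (measure_ne_top μ C) (1 : ℝ)),
      indicatorConstLp_coeFn (p := 2) (hs := hB) (hμs := measure_ne_top μ B) (c := (1:ℝ)),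
      indicatorConstLp_coeFn (p := 2) (hs := hC) (hμs := measure_ne_top μ C) (c := (1:ℝ))]
      with ω h1 h2 h3
    simp only [hηdef] at h1 ⊢
    rw [h1]
    simp [h2, h3]
  have hζm : Measurable (⇑ζ : Ω → ℝ) := (Lp.stronglyMeasurable ζ).measurable
  -- F (ζ + ε • η) = F (ζ + ε • (-η)) for all ε
  have hkey : ∀ ε : ℝ, F (ζ + ε • η) = F (ζ + ε • (-η)) := by
    intro ε
    set g : Ω → ℝ := fun ω =>
      ζ ω + ε * (B.indicator (fun _ => (1:ℝ)) ω - C.indicator (fun _ => (1:ℝ)) ω) with hgdef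
    set g' : Ω → ℝ := fun ω =>
      ζ ω - ε * (B.indicator (fun _ => (1:ℝ)) ω - C.indicator (fun _ => (1:ℝ)) ω) with hg'def
    have hgm : Measurable g := by
      apply hζm.add
      exact (measurable_const.mul (((measurable_const.indicator hB)).sub
        ((measurable_const.indicator hC))))
    have hg'm : Measurable g' := by
      apply hζm.sub
      exact (measurable_const.mul (((measurable_const.indicator hB)).sub
        ((measurable_const.indicator hC))))
    have hcoe1 : ⇑(ζ + ε • η) =ᵐ[μ] g := by
      filter_upwards [Lp.coeFn_add ζ (ε • η), Lp.coeFn_smul ε η, hη] with ω h1 h2 h3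
      simp only [hgdef, Pi.add_apply, Pi.smul_apply, smul_eq_mul] at h1 h2 ⊢
      rw [h1, h2, h3]
    have hcoe2 : ⇑(ζ + ε • (-η)) =ᵐ[μ] g' := by
      filter_upwards [Lp.coeFn_add ζ (ε • (-η)), Lp.coeFn_smul ε (-η), Lp.coeFn_neg η, hη]
        with ω h1 h2 h3 h4
      simp only [hg'def, Pi.add_apply, Pi.smul_apply, Pi.neg_apply, smul_eq_mul] at h1 h2 h3 ⊢
      rw [h1, h2, h3, h4]
      ring
    apply hlaw
    rw [Measure.map_congr hcoe1, Measure.map_congr hcoe2]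
    -- decompose μ
    have hone : μ.restrict (B ∪ C) = μ.restrict B + μ.restrict C :=
      Measure.restrict_union hd hC
    have hdec : μ.restrict B + μ.restrict C + μ.restrict (B ∪ C)ᶜ = μ := by
      rw [← hone]
      exact Measure.restrict_add_restrict_compl (hB.union hC)
    have hBnotC : ∀ ω ∈ B, ω ∉ C := fun ω hω => Set.disjoint_left.mp hd hω
    have hgB : g =ᵐ[μ.restrict B] fun _ => a + ε := by
      filter_upwards [ae_restrict_mem hB, ae_restrict_of_ae haB] with ω hωB hωa
      simp only [hgdef]
      rw [hωa hωB, Set.indicator_of_mem hωB, Set.indicator_of_notMem (hBnotC ω hωB)]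
      ring
    have hgC : g =ᵐ[μ.restrict C] fun _ => a - ε := by
      filter_upwards [ae_restrict_mem hC, ae_restrict_of_ae haC] with ω hωC hωa
      simp only [hgdef]
      rw [hωa hωC, Set.indicator_of_notMem (fun h => Set.disjoint_left.mp hd h hωC),
        Set.indicator_of_mem hωC]
      ring
    have hg'B : g' =ᵐ[μ.restrict B] fun _ => a - ε := by
      filter_upwards [ae_restrict_mem hB, ae_restrict_of_ae haB] with ω hωB hωa
      simp only [hg'def]
      rw [hωa hωB, Set.indicator_of_mem hωB, Set.indicator_of_notMem (hBnotC ω hωB)]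
      ring
    have hg'C : g' =ᵐ[μ.restrict C] fun _ => a + ε := by
      filter_upwards [ae_restrict_mem hC, ae_restrict_of_ae haC] with ω hωC hωa
      simp only [hg'def]
      rw [hωa hωC, Set.indicator_of_notMem (fun h => Set.disjoint_left.mp hd h hωC),
        Set.indicator_of_mem hωC]
      ring
    have hgR : g =ᵐ[μ.restrict (B ∪ C)ᶜ] ⇑ζ := by
      filter_upwards [ae_restrict_mem (hB.union hC).compl] with ω hω
      simp only [Set.mem_compl_iff, Set.mem_union, not_or] at hω
      simp only [hgdef]
      rw [Set.indicator_of_notMem hω.1, Set.indicator_of_notMem hω.2]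
      ring
    have hg'R : g' =ᵐ[μ.restrict (B ∪ C)ᶜ] ⇑ζ := by
      filter_upwards [ae_restrict_mem (hB.union hC).compl] with ω hω
      simp only [Set.mem_compl_iff, Set.mem_union, not_or] at hω
      simp only [hg'def]
      rw [Set.indicator_of_notMem hω.1, Set.indicator_of_notMem hω.2]
      ring
    calc Measure.map g μ
        = Measure.map g (μ.restrict B) + Measure.map g (μ.restrict C)
          + Measure.map g (μ.restrict (B ∪ C)ᶜ) := by
          conv_lhs => rw [← hdec]
          rw [Measure.map_add _ _ hgm, Measure.map_add _ _ hgm]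
      _ = μ B • Measure.dirac (a + ε) + μ C • Measure.dirac (a - ε)
          + Measure.map (⇑ζ) (μ.restrict (B ∪ C)ᶜ) := by
          rw [Measure.map_congr hgB, Measure.map_congr hgC, Measure.map_congr hgR,
            Measure.map_const, Measure.map_const]
          simp
      _ = μ B • Measure.dirac (a - ε) + μ C • Measure.dirac (a + ε)
          + Measure.map (⇑ζ) (μ.restrict (B ∪ C)ᶜ) := by
          rw [hBC, add_comm (μ C • Measure.dirac (a + ε))]
      _ = Measure.map g' (μ.restrict B) + Measure.map g' (μ.restrict C)
          + Measure.map g' (μ.restrict (B ∪ C)ᶜ) := by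
          rw [Measure.map_congr hg'B, Measure.map_congr hg'C, Measure.map_congr hg'R,
            Measure.map_const, Measure.map_const]
          simp
      _ = Measure.map g' μ := by
          conv_rhs => rw [← hdec]
          rw [Measure.map_add _ _ hg'm, Measure.map_add _ _ hg'm]
  -- uniqueness of the derivative
  have h1 := hdiff ζ η
  have h2 := hdiff ζ (-η)
  have heqfun : (fun ε : ℝ => (F (ζ + ε • η) - F ζ) / ε)
      = fun ε : ℝ => (F (ζ + ε • (-η)) - F ζ) / ε := by
    funext ε
    rw [hkey ε]
  rw [heqfun] at h1
  have huniq : ∫ ω, DF ζ ω * (-η) ω ∂μ = ∫ ω, DF ζ ω * η ω ∂μ :=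
    tendsto_nhds_unique h2 h1
  have hneg : ∫ ω, DF ζ ω * (-η) ω ∂μ = - ∫ ω, DF ζ ω * η ω ∂μ := by
    rw [← integral_neg]
    apply integral_congr_ae
    filter_upwards [Lp.coeFn_neg η] with ω hω
    rw [hω, Pi.neg_apply]
    ring
  have hzero : ∫ ω, DF ζ ω * η ω ∂μ = 0 := by
    rw [hneg] at huniq
    linarith
  -- compute the integral
  have hZi : Integrable (⇑(DF ζ)) μ := (Lp.memLp (DF ζ)).integrable (by norm_num)
  have hint1 : ∫ ω, DF ζ ω * η ω ∂μ
      = ∫ ω, (B.indicator (⇑(DF ζ)) ω - C.indicator (⇑(DF ζ)) ω) ∂μ := by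
    apply integral_congr_ae
    filter_upwards [hη] with ω hω
    rw [hω]
    by_cases h1 : ω ∈ B
    · have h2 : ω ∉ C := Set.disjoint_left.mp hd h1
      rw [Set.indicator_of_mem h1, Set.indicator_of_notMem h2,
        Set.indicator_of_mem h1, Set.indicator_of_notMem h2]
      ring
    · by_cases h2 : ω ∈ C
      · rw [Set.indicator_of_notMem h1, Set.indicator_of_mem h2,
          Set.indicator_of_notMem h1, Set.indicator_of_mem h2]
        ring
      · rw [Set.indicator_of_notMem h1, Set.indicator_of_notMem h2,
          Set.indicator_of_notMem h1, Set.indicator_of_notMem h2]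
        ring
  have hint2 : ∫ ω, (B.indicator (⇑(DF ζ)) ω - C.indicator (⇑(DF ζ)) ω) ∂μ
      = ∫ ω in B, DF ζ ω ∂μ - ∫ ω in C, DF ζ ω ∂μ := by
    rw [integral_sub (hZi.indicator hB) (hZi.indicator hC),
      integral_indicator hB, integral_indicator hC]
  rw [hint1, hint2] at hzero
  linarith

theorem aux_main
    {Ω : Type*} {mΩ : MeasurableSpace Ω} (μ : Measure Ω) [IsProbabilityMeasure μ]
    (hatomless : ∀ s : Set Ω, MeasurableSet s → 0 < μ s →
      ∃ t ⊆ s, MeasurableSet t ∧ 0 < μ t ∧ μ t < μ s)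
    (F : Lp ℝ 2 μ → ℝ)
    (hlaw : ∀ ζ ζ' : Lp ℝ 2 μ, Measure.map (ζ : Ω → ℝ) μ = Measure.map (ζ' : Ω → ℝ) μ →
      F ζ = F ζ')
    (DF : Lp ℝ 2 μ → Lp ℝ 2 μ)
    (hdiff : ∀ ζ η : Lp ℝ 2 μ,
      Tendsto (fun ε : ℝ => (F (ζ + ε • η) - F ζ) / ε) (𝓝[≠] 0)
        (𝓝 (∫ ω, DF ζ ω * η ω ∂μ)))
    (hcont : Continuous DF)
    (ξ : Lp ℝ 2 μ) :
    μ[(DF ξ : Ω → ℝ) | MeasurableSpace.comap (ξ : Ω → ℝ) Real.measurableSpace]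
      =ᵐ[μ] DF ξ := by
  classical
  set ξr : Ω → ℝ := ⇑ξ with hξr
  have hξsm : StronglyMeasurable ξr := Lp.stronglyMeasurable ξ
  set m : MeasurableSpace Ω := MeasurableSpace.comap ξr Real.measurableSpace with hmdef
  have hm : m ≤ mΩ := hξsm.measurable.comap_le
  haveI : SigmaFinite (μ.trim hm) := by
    haveI : IsFiniteMeasure (μ.trim hm) := isFiniteMeasure_trim hm
    infer_instance
  -- dyadic approximations
  set φ : ℕ → ℝ → ℝ := fun n x => (⌊x * 2 ^ n⌋ : ℝ) / 2 ^ n with hφdef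
  have hφmeas : ∀ n, Measurable (φ n) := by
    intro n
    exact ((measurable_of_countable (fun k : ℤ => (k : ℝ))).comp
      (Int.measurable_floor.comp (measurable_id.mul_const _))).div_const _
  have hφbound : ∀ n x, |φ n x - x| ≤ (2 : ℝ)⁻¹ ^ n := by
    intro n x
    have hpow : (0 : ℝ) < 2 ^ n := by positivity
    have h1 : (⌊x * 2 ^ n⌋ : ℝ) ≤ x * 2 ^ n := Int.floor_le _
    have h2 : x * 2 ^ n < (⌊x * 2 ^ n⌋ : ℝ) + 1 := Int.lt_floor_add_one _
    have e1 : φ n x - x = ((⌊x * 2 ^ n⌋ : ℝ) - x * 2 ^ n) / 2 ^ n := by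
      simp only [hφdef]
      field_simp
    rw [e1, abs_div, abs_of_pos hpow, inv_pow, ← one_div]
    gcongr
    rw [abs_le]
    constructor <;> linarith
  -- the approximating Lp elements
  have hmem : ∀ n, MemLp (fun ω => φ n (ξr ω)) 2 μ := by
    intro n
    have hgap : MemLp (fun ω => φ n (ξr ω) - ξr ω) 2 μ := by
      refine MemLp.of_bound ?_ ((2 : ℝ)⁻¹ ^ n) ?_
      · exact (((hφmeas n).comp hξsm.measurable).sub hξsm.measurable).stronglyMeasurable.aestronglyMeasurable
      · filter_upwards with ω
        exact hφbound n (ξr ω)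
    have h := (Lp.memLp ξ).add hgap
    have heq : (fun ω => φ n (ξr ω)) = ⇑ξ + fun ω => φ n (ξr ω) - ξr ω := by
      funext ω
      simp only [Pi.add_apply, hξr]
      ring
    rw [heq]
    exact h
  set ζ : ℕ → Lp ℝ 2 μ := fun n => (hmem n).toLp (fun ω => φ n (ξr ω)) with hζdef
  have hζcoe : ∀ n, ⇑(ζ n) =ᵐ[μ] fun ω => φ n (ξr ω) := fun n => (hmem n).coeFn_toLp
  -- ζ n → ξ in L²
  have hζnorm : ∀ n, ‖ζ n - ξ‖ ≤ (2 : ℝ)⁻¹ ^ n := by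
    intro n
    have hbd : ∀ᵐ ω ∂μ, ‖(ζ n - ξ) ω‖ ≤ (2 : ℝ)⁻¹ ^ n := by
      filter_upwards [Lp.coeFn_sub (ζ n) ξ, hζcoe n] with ω h1 h2
      rw [h1, Pi.sub_apply, h2]
      exact hφbound n (ξr ω)
    have := Lp.norm_le_of_ae_bound (f := ζ n - ξ) (by positivity) hbd
    refine this.trans ?_
    have h1 : measureUnivNNReal μ = 1 := by
      simp [measureUnivNNReal, measure_univ]
    rw [h1]
    simp
  have hζtend : Tendsto ζ atTop (𝓝 ξ) := by
    rw [tendsto_iff_dist_tendsto_zero]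
    refine squeeze_zero (g := fun n => (2 : ℝ)⁻¹ ^ n) (fun n => dist_nonneg) (fun n => ?_) ?_
    · rw [dist_eq_norm]
      exact hζnorm n
    · exact tendsto_pow_atTop_nhds_zero_of_lt_one (by norm_num) (by norm_num)
  have hDFtend : Tendsto (fun n => DF (ζ n)) atTop (𝓝 (DF ξ)) :=
    (hcont.tendsto ξ).comp hζtend
  -- level sets
  set A : ℕ → ℤ → Set Ω := fun n k => ξr ⁻¹' {x | ⌊x * 2 ^ n⌋ = k} with hAdef
  have hAmeas : ∀ n k, MeasurableSet[mΩ] (A n k) := by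
    intro n k
    have hfm : Measurable fun x : ℝ => ⌊x * (2:ℝ) ^ n⌋ :=
      Int.measurable_floor.comp (measurable_id.mul_const _)
    exact hξsm.measurable (hfm (measurableSet_singleton k))
  have hζconst : ∀ n k, ∀ᵐ ω ∂μ, ω ∈ A n k → (ζ n) ω = (k : ℝ) / 2 ^ n := by
    intro n k
    filter_upwards [hζcoe n] with ω h hω
    rw [h]
    have hk : ⌊ξr ω * 2 ^ n⌋ = k := hω
    simp only [hφdef, hk]
  -- a.e. constancy of DF (ζ n) on each level set
  have hconst : ∀ n k, ∃ c : ℝ, ∀ᵐ ω ∂μ, ω ∈ A n k → (DF (ζ n) : Ω → ℝ) ω = c := by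
    intro n k
    refine @aux_ae_const Ω mΩ μ _ hatomless (A n k) (hAmeas n k) (⇑(DF (ζ n)))
      (Lp.stronglyMeasurable (DF (ζ n)))
      ((Lp.memLp (DF (ζ n))).integrable one_le_two) ?_
    intro B C hB hC hBA hCA hd hBC
    refine @aux_setint_eq Ω mΩ μ _ F hlaw DF hdiff (ζ n) ((k : ℝ) / 2 ^ n) B C hB hC hd hBC ?_ ?_
    · filter_upwards [hζconst n k] with ω h hωB
      exact h (hBA hωB)
    · filter_upwards [hζconst n k] with ω h hωC
      exact h (hCA hωC)
  choose c hc using hconst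
  -- the m-measurable versions
  set W : ℕ → Ω → ℝ := fun n ω => c n ⌊ξr ω * 2 ^ n⌋ with hWdef
  have hξm' : Measurable[m] ξr := Measurable.of_comap_le le_rfl
  have hWmeas : ∀ n, Measurable[m] (W n) := by
    intro n
    exact ((measurable_of_countable (c n)).comp
      (Int.measurable_floor.comp (measurable_id.mul_const _))).comp hξm'
  have hWeq : ∀ n, W n =ᵐ[μ] ⇑(DF (ζ n)) := by
    intro n
    have hall : ∀ᵐ ω ∂μ, ∀ k : ℤ, ω ∈ A n k → (DF (ζ n) : Ω → ℝ) ω = c n k :=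
      ae_all_iff.mpr fun k => hc n k
    filter_upwards [hall] with ω hω
    exact (hω ⌊ξr ω * 2 ^ n⌋ rfl).symm
  have hZni : ∀ n, Integrable (⇑(DF (ζ n))) μ :=
    fun n => (Lp.memLp (DF (ζ n))).integrable one_le_two
  have hWint : ∀ n, Integrable (W n) μ := fun n => (hZni n).congr (hWeq n).symm
  have hEn : ∀ n, μ[(DF (ζ n) : Ω → ℝ)|m] =ᵐ[μ] ⇑(DF (ζ n)) := by
    intro n
    have h1 : μ[(DF (ζ n) : Ω → ℝ)|m] =ᵐ[μ] μ[W n|m] := condExp_congr_ae (hWeq n).symm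
    have h2 : μ[W n|m] = W n :=
      condExp_of_stronglyMeasurable hm ((hWmeas n).stronglyMeasurable) (hWint n)
    rw [h2] at h1
    exact h1.trans (hWeq n)
  -- pass to the limit
  set Z : Ω → ℝ := ⇑(DF ξ) with hZdef
  have hZi : Integrable Z μ := (Lp.memLp (DF ξ)).integrable one_le_two
  have hbound : ∀ n, eLpNorm (μ[Z|m] - Z) 1 μ ≤ 2 * eLpNorm (⇑(DF (ζ n)) - Z) 1 μ := by
    intro n
    have hdecomp : μ[Z|m] - Z =ᵐ[μ] μ[Z - ⇑(DF (ζ n))|m] + (⇑(DF (ζ n)) - Z) := by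
      have h1 : μ[Z - ⇑(DF (ζ n))|m] =ᵐ[μ] μ[Z|m] - μ[⇑(DF (ζ n))|m] :=
        condExp_sub hZi (hZni n) m
      filter_upwards [h1, hEn n] with ω hω1 hω2
      simp only [Pi.add_apply, Pi.sub_apply] at *
      rw [hω1, hω2]
      ring
    calc eLpNorm (μ[Z|m] - Z) 1 μ
        = eLpNorm (μ[Z - ⇑(DF (ζ n))|m] + (⇑(DF (ζ n)) - Z)) 1 μ :=
          eLpNorm_congr_ae hdecomp
      _ ≤ eLpNorm (μ[Z - ⇑(DF (ζ n))|m]) 1 μ + eLpNorm (⇑(DF (ζ n)) - Z) 1 μ := by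
          refine eLpNorm_add_le ?_ ?_ le_rfl
          · exact (stronglyMeasurable_condExp.mono hm).aestronglyMeasurable
          · exact ((Lp.aestronglyMeasurable (DF (ζ n)))).sub (Lp.aestronglyMeasurable (DF ξ))
      _ ≤ eLpNorm (Z - ⇑(DF (ζ n))) 1 μ + eLpNorm (⇑(DF (ζ n)) - Z) 1 μ := by
          gcongr
          exact eLpNorm_one_condExp_le_eLpNorm _
      _ = 2 * eLpNorm (⇑(DF (ζ n)) - Z) 1 μ := by
          rw [show Z - ⇑(DF (ζ n)) = -(⇑(DF (ζ n)) - Z) by ring, eLpNorm_neg]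
          ring
  have hsmall : ∀ n, eLpNorm (⇑(DF (ζ n)) - Z) 1 μ ≤ ENNReal.ofReal ‖DF (ζ n) - DF ξ‖ := by
    intro n
    have h1 : eLpNorm (⇑(DF (ζ n)) - Z) 1 μ = eLpNorm (⇑(DF (ζ n) - DF ξ)) 1 μ := by
      refine (eLpNorm_congr_ae ?_).symm
      filter_upwards [Lp.coeFn_sub (DF (ζ n)) (DF ξ)] with ω hω
      rw [hω]
    have h2 : eLpNorm (⇑(DF (ζ n) - DF ξ)) 1 μ ≤ eLpNorm (⇑(DF (ζ n) - DF ξ)) 2 μ :=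
      eLpNorm_le_eLpNorm_of_exponent_le (by norm_num) (Lp.aestronglyMeasurable _)
    have h3 : eLpNorm (⇑(DF (ζ n) - DF ξ)) 2 μ = ENNReal.ofReal ‖DF (ζ n) - DF ξ‖ := by
      rw [Lp.norm_def, ENNReal.ofReal_toReal (Lp.eLpNorm_ne_top _)]
    rw [h1, ← h3]
    exact h2
  have htend0 : Tendsto (fun n => 2 * ENNReal.ofReal ‖DF (ζ n) - DF ξ‖) atTop (𝓝 0) := by
    have hnorm0 : Tendsto (fun n => ‖DF (ζ n) - DF ξ‖) atTop (𝓝 0) := by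
      rw [← tendsto_iff_norm_sub_tendsto_zero]
      exact hDFtend
    have h1 : Tendsto (fun n => ENNReal.ofReal ‖DF (ζ n) - DF ξ‖) atTop (𝓝 0) := by
      have := (ENNReal.continuous_ofReal.tendsto 0).comp hnorm0
      rw [ENNReal.ofReal_zero] at this
      exact this
    have := ENNReal.Tendsto.const_mul h1 (Or.inr (ENNReal.ofNat_ne_top : (2 : ℝ≥0∞) ≠ ∞))
    simpa using this
  have hfinal : eLpNorm (μ[Z|m] - Z) 1 μ = 0 := by
    have hle : eLpNorm (μ[Z|m] - Z) 1 μ ≤ 0 := by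
      refine ge_of_tendsto' htend0 fun n => ?_
      calc eLpNorm (μ[Z|m] - Z) 1 μ ≤ 2 * eLpNorm (⇑(DF (ζ n)) - Z) 1 μ := hbound n
        _ ≤ 2 * ENNReal.ofReal ‖DF (ζ n) - DF ξ‖ := by gcongr; exact hsmall n
    exact le_antisymm hle zero_le
  have hae : μ[Z|m] - Z =ᵐ[μ] 0 := by
    refine (eLpNorm_eq_zero_iff ?_ one_ne_zero).mp hfinal
    exact (stronglyMeasurable_condExp.mono hm).aestronglyMeasurable.sub
      (Lp.aestronglyMeasurable (DF ξ))
  filter_upwards [hae] with ω hω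
  have : (μ[Z|m]) ω - Z ω = 0 := hω
  linarith

end AuxiliaryLemmas

/-- The gradient `DF(ξ)` of a law-invariant, continuously Fréchet differentiable `F` is
measurable with respect to `σ(ξ)` up to null sets: `E[DF(ξ) | σ(ξ)] = DF(ξ)` a.s. -/
theorem wasserstein_derivative_sigma_measurable
    {Ω : Type*} [MeasurableSpace Ω] (μ : Measure Ω) [IsProbabilityMeasure μ]
    (hatomless : ∀ s : Set Ω, MeasurableSet s → 0 < μ s →
      ∃ t ⊆ s, MeasurableSet t ∧ 0 < μ t ∧ μ t < μ s)
    (F : Lp ℝ 2 μ → ℝ)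
    (hlaw : ∀ ζ ζ' : Lp ℝ 2 μ, Measure.map (ζ : Ω → ℝ) μ = Measure.map (ζ' : Ω → ℝ) μ →
      F ζ = F ζ')
    (DF : Lp ℝ 2 μ → Lp ℝ 2 μ)
    (hdiff : ∀ ζ η : Lp ℝ 2 μ,
      Tendsto (fun ε : ℝ => (F (ζ + ε • η) - F ζ) / ε) (𝓝[≠] 0)
        (𝓝 (∫ ω, DF ζ ω * η ω ∂μ)))
    (hcont : Continuous DF)
    (ξ : Lp ℝ 2 μ) :
    μ[(DF ξ : Ω → ℝ) | MeasurableSpace.comap (ξ : Ω → ℝ) Real.measurableSpace]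
      =ᵐ[μ] DF ξ :=
  aux_main μ hatomless F hlaw DF hdiff hcont ξ
end

section
/- Let ξ be a discrete random variable with P(ξ = x_i) = p_i > 0 on an atomless probability space, and let F : L²(Ω, ℝ) → ℝ be law-invariant and Fréchet differentiable at ξ. Then for any measurable A₁ ⊆ {ξ = x_i}, the quantity E[DF(ξ)·1_{A₁}] depends only on P(A₁): if A₁, A₂ ⊆ {ξ = x_i} with P(A₁) = P(A₂), then E[DF(ξ)·1_{A₁}] = E[DF(ξ)·1_{A₂}]. -/
open MeasureTheory Filter Topology
open scoped ENNReal

/-- For a discrete `ξ` and a law-invariant Fréchet differentiable `F`, the quantity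
`E[DF(ξ)·1_{A₁}]` depends only on `P(A₁)` among measurable subsets `A₁ ⊆ {ξ = x i}`. -/
theorem gradient_integral_depends_only_on_measure
    {Ω : Type*} [MeasurableSpace Ω] (μ : Measure Ω) [IsProbabilityMeasure μ]
    (hatomless : ∀ s : Set Ω, MeasurableSet s → 0 < μ s →
      ∃ t ⊆ s, MeasurableSet t ∧ 0 < μ t ∧ μ t < μ s)
    (ξ : Ω → ℝ) (hξ : MemLp ξ 2 μ) (hξm : Measurable ξ)
    (x : ℕ → ℝ) (hx : Function.Injective x)
    (p : ℕ → ℝ≥0∞) (hp : ∀ i, μ {ω | ξ ω = x i} = p i) (hppos : ∀ i, 0 < p i)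
    (hdiscrete : ∀ᵐ ω ∂μ, ∃ i, ξ ω = x i)
    (F : (Ω → ℝ) → ℝ)
    (hlaw : ∀ ζ ζ' : Ω → ℝ, MemLp ζ 2 μ → MemLp ζ' 2 μ →
      Measure.map ζ μ = Measure.map ζ' μ → F ζ = F ζ')
    (DFξ : Ω → ℝ) (hDFξ : MemLp DFξ 2 μ)
    (hdiff : ∀ η : Ω → ℝ, MemLp η 2 μ →
      Tendsto (fun ε : ℝ => (F (ξ + ε • η) - F ξ) / ε) (𝓝[≠] 0)
        (𝓝 (∫ ω, DFξ ω * η ω ∂μ))) :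
    ∀ i : ℕ, ∀ A₁ A₂ : Set Ω, MeasurableSet A₁ → MeasurableSet A₂ →
      A₁ ⊆ {ω | ξ ω = x i} → A₂ ⊆ {ω | ξ ω = x i} → μ A₁ = μ A₂ →
      ∫ ω in A₁, DFξ ω ∂μ = ∫ ω in A₂, DFξ ω ∂μ := by
  classical
  intro i A₁ A₂ hA₁ hA₂ hA₁s hA₂s hμeq
  -- the perturbed measure computation
  have key : ∀ A : Set Ω, MeasurableSet A → A ⊆ {ω | ξ ω = x i} → ∀ ε : ℝ,
      ∀ B : Set ℝ, MeasurableSet B →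
      μ ((ξ + ε • A.indicator (fun _ => (1:ℝ))) ⁻¹' B)
        = μ (ξ ⁻¹' B) - (if x i ∈ B then μ A else 0)
          + (if x i + ε ∈ B then μ A else 0) := by
    intro A hA hAs ε B hB
    have hpre : (ξ + ε • A.indicator (fun _ => (1:ℝ))) ⁻¹' B
        = (ξ ⁻¹' B \ A) ∪ (if x i + ε ∈ B then A else ∅) := by
      ext ω
      by_cases hω : ω ∈ A
      · have hξω : ξ ω = x i := hAs hω
        simp only [Set.mem_preimage, Pi.add_apply, Pi.smul_apply,
          Set.indicator_of_mem hω, smul_eq_mul, mul_one, hξω,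
          Set.mem_union, Set.mem_diff, hω, not_true, and_false, false_or]
        by_cases hb : x i + ε ∈ B <;> simp [hb, hω]
      · simp only [Set.mem_preimage, Pi.add_apply, Pi.smul_apply,
          Set.indicator_of_notMem hω, smul_eq_mul, mul_zero, add_zero,
          Set.mem_union, Set.mem_diff, hω, not_false_iff, and_true]
        by_cases hb : x i + ε ∈ B <;> simp [hb, hω]
    have hinter : ξ ⁻¹' B ∩ A = if x i ∈ B then A else ∅ := by
      ext ω
      by_cases hω : ω ∈ A
      · have hξω : ξ ω = x i := hAs hω
        by_cases hb : x i ∈ B <;> simp [Set.mem_preimage, hξω, hb, hω]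
      · by_cases hb : x i ∈ B <;> simp [hb, hω]
    have hdiff' : μ (ξ ⁻¹' B \ A) = μ (ξ ⁻¹' B) - (if x i ∈ B then μ A else 0) := by
      have h1 : ξ ⁻¹' B \ A = ξ ⁻¹' B \ (ξ ⁻¹' B ∩ A) := by
        rw [Set.diff_self_inter]
      rw [h1, measure_diff Set.inter_subset_left ((hξm hB).inter hA).nullMeasurableSet
        (measure_ne_top μ _), hinter]
      by_cases hb : x i ∈ B <;> simp [hb]
    have hdisj : Disjoint (ξ ⁻¹' B \ A) (if x i + ε ∈ B then A else ∅) := by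
      by_cases hb : x i + ε ∈ B <;>
        simp [hb, Set.disjoint_sdiff_left.mono_right le_rfl, Set.disjoint_sdiff_left]
    have hmeas2 : MeasurableSet (if x i + ε ∈ B then A else ∅) := by
      by_cases hb : x i + ε ∈ B <;> simp [hb, hA]
    rw [hpre, measure_union hdisj hmeas2, hdiff']
    congr 1
    by_cases hb : x i + ε ∈ B <;> simp [hb]
  have hηmem : ∀ A : Set Ω, MeasurableSet A →
      MemLp (A.indicator (fun _ => (1:ℝ))) 2 μ := fun A hA =>
    memLp_indicator_const 2 hA 1 (Or.inr (measure_ne_top μ _))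
  have hmeasf : ∀ A : Set Ω, MeasurableSet A → ∀ ε : ℝ,
      Measurable (ξ + ε • A.indicator (fun _ => (1:ℝ))) := fun A hA ε =>
    hξm.add ((measurable_const.indicator hA).const_smul ε)
  -- equality of laws
  have hmap : ∀ ε : ℝ,
      Measure.map (ξ + ε • A₁.indicator (fun _ => (1:ℝ))) μ
        = Measure.map (ξ + ε • A₂.indicator (fun _ => (1:ℝ))) μ := by
    intro ε
    refine Measure.ext fun B hB => ?_
    rw [Measure.map_apply (hmeasf A₁ hA₁ ε) hB, Measure.map_apply (hmeasf A₂ hA₂ ε) hB,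
      key A₁ hA₁ hA₁s ε B hB, key A₂ hA₂ hA₂s ε B hB, hμeq]
  -- equality of F along the perturbations
  have hFeq : ∀ ε : ℝ,
      F (ξ + ε • A₁.indicator (fun _ => (1:ℝ)))
        = F (ξ + ε • A₂.indicator (fun _ => (1:ℝ))) := fun ε =>
    hlaw _ _ (hξ.add ((hηmem A₁ hA₁).const_smul ε)) (hξ.add ((hηmem A₂ hA₂).const_smul ε))
      (hmap ε)
  have h1 := hdiff _ (hηmem A₁ hA₁)
  have h2 := hdiff _ (hηmem A₂ hA₂)
  have h1' : Tendsto (fun ε : ℝ =>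
      (F (ξ + ε • A₂.indicator (fun _ => (1:ℝ))) - F ξ) / ε) (𝓝[≠] 0)
      (𝓝 (∫ ω, DFξ ω * A₁.indicator (fun _ => (1:ℝ)) ω ∂μ)) := by
    refine h1.congr fun ε => ?_
    rw [hFeq ε]
  have hint : (∫ ω, DFξ ω * A₁.indicator (fun _ => (1:ℝ)) ω ∂μ)
      = ∫ ω, DFξ ω * A₂.indicator (fun _ => (1:ℝ)) ω ∂μ :=
    tendsto_nhds_unique h1' h2
  have hconv : ∀ A : Set Ω, MeasurableSet A →
      (∫ ω, DFξ ω * A.indicator (fun _ => (1:ℝ)) ω ∂μ) = ∫ ω in A, DFξ ω ∂μ := by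
    intro A hA
    rw [← integral_indicator hA]
    congr 1
    funext ω
    by_cases hω : ω ∈ A <;> simp [hω]
  rw [← hconv A₁ hA₁, ← hconv A₂ hA₂, hint]
end
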